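/- arXiv:0804.0724 — 4 statements merged into one kernel-verified Lean document; each statement's English description precedes it below -/
import Mathlib

section
/- For k ≥ 2 and c ≥ 2, if every c-coloring of {1,...,n} contains a monochromatic k-term arithmetic progression, then ⌈log_c(n²/k)⌉ + 1 ≥ k; equivalently n² · c ≥ c^(k-1) · k (up to ceiling), giving n > √k · c^(k/2 − 1). -/
/-- A coloring χ contains a monochromatic k-term arithmetic progression
within {1,...,n}. -/
def hasMonoAP (c k n : ℕ) (χ : ℕ → Fin c) : Prop :=
  ∃ a d : ℕ, 1 ≤ a ∧ 1 ≤ d ∧ a + (k - 1) * d ≤ n ∧ ∀ i < k, χ (a + i * d) = χ a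

/-- The van der Waerden number w(k;c): the least n such that every c-coloring of
{1,...,n} contains a monochromatic k-term arithmetic progression. -/
noncomputable def vdW (k c : ℕ) : ℕ := sInf {n | ∀ χ : ℕ → Fin c, hasMonoAP c k n χ}

lemma vdw_counting (k c n : ℕ) (hk : 2 ≤ k) (hc : 2 ≤ c)
    (h : ∀ χ : ℕ → Fin c, hasMonoAP c k n χ) :
    (k - 1) * c ^ (k - 1) ≤ n * n := by
  classical
  have hc0 : 0 < c := by omega
  -- n ≥ k
  have hnk : k ≤ n := by
    obtain ⟨a, d, ha, hd, hle, -⟩ := h (fun _ => ⟨0, hc0⟩)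
    have h1 : k - 1 ≤ (k - 1) * d := Nat.le_mul_of_pos_right _ hd
    omega
  have hn0 : 0 < n := by omega
  -- extension of a finite coloring to ℕ
  set E : (Fin n → Fin c) → ℕ → Fin c := fun χ i =>
    if hi : 1 ≤ i ∧ i ≤ n then χ ⟨i - 1, by omega⟩ else ⟨0, hc0⟩ with hE
  set P : Finset (ℕ × ℕ) :=
    (Finset.Icc 1 n ×ˢ Finset.Icc 1 n).filter (fun p => p.1 + (k - 1) * p.2 ≤ n) with hP
  set A : ℕ × ℕ → Finset (Fin n) :=
    fun p => Finset.univ.filter (fun j => ∃ i < k, (j : ℕ) + 1 = p.1 + i * p.2) with hA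
  set F : ℕ × ℕ → Fin c → Finset (Fin n → Fin c) :=
    fun p v => Finset.univ.filter (fun χ => ∀ j ∈ A p, χ j = v) with hF
  have hEχ : ∀ (χ : Fin n → Fin c) (j : Fin n), E χ ((j : ℕ) + 1) = χ j := by
    intro χ j
    have hj := j.isLt
    simp only [hE]
    rw [dif_pos ⟨by omega, by omega⟩]
    exact congrArg χ (by ext; simp)
  -- covering
  have hcover : (Finset.univ : Finset (Fin n → Fin c)) ⊆
      (P ×ˢ Finset.univ).biUnion (fun pv => F pv.1 pv.2) := by
    intro χ _
    obtain ⟨a, d, ha, hd, hle, hmono⟩ := h (E χ)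
    have h1 : a ≤ a + (k - 1) * d := Nat.le_add_right _ _
    have h2 : d ≤ (k - 1) * d := Nat.le_mul_of_pos_left d (by omega)
    rw [Finset.mem_biUnion]
    refine ⟨((a, d), E χ a), ?_, ?_⟩
    · simp only [Finset.mem_product, Finset.mem_filter, Finset.mem_Icc, hP]
      refine ⟨⟨⟨⟨ha, by omega⟩, ⟨hd, by omega⟩⟩, hle⟩, Finset.mem_univ _⟩
    · simp only [hF, Finset.mem_filter, Finset.mem_univ, true_and]
      intro j hj
      simp only [hA, Finset.mem_filter, Finset.mem_univ, true_and] at hj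
      obtain ⟨i, hik, hji⟩ := hj
      have : χ j = E χ ((j : ℕ) + 1) := (hEχ χ j).symm
      rw [this, hji]
      exact hmono i hik
  -- card of A p
  have hAcard : ∀ p ∈ P, k ≤ (A p).card := by
    intro p hp
    simp only [hP, Finset.mem_filter, Finset.mem_product, Finset.mem_Icc] at hp
    obtain ⟨⟨⟨ha1, han⟩, ⟨hd1, hdn⟩⟩, hle⟩ := hp
    have : (Finset.range k).card ≤ (A p).card := by
      apply Finset.card_le_card_of_injOn
        (fun i => if hi : p.1 + i * p.2 - 1 < n then (⟨p.1 + i * p.2 - 1, hi⟩ : Fin n)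
                  else ⟨0, hn0⟩)
      · intro i hi
        rw [Finset.mem_coe, Finset.mem_range] at hi
        rw [Finset.mem_coe]; dsimp only
        have hb : p.1 + i * p.2 ≤ n := by
          have : i * p.2 ≤ (k - 1) * p.2 := Nat.mul_le_mul_right _ (by omega)
          omega
        have hlt : p.1 + i * p.2 - 1 < n := by omega
        rw [dif_pos hlt]
        simp only [hA, Finset.mem_filter, Finset.mem_univ, true_and]
        exact ⟨i, hi, by omega⟩
      · intro i hi i' hi' hii
        rw [Finset.mem_coe, Finset.mem_range] at hi hi'
        have hb : ∀ m < k, p.1 + m * p.2 - 1 < n := by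
          intro m hm
          have : m * p.2 ≤ (k - 1) * p.2 := Nat.mul_le_mul_right _ (by omega)
          omega
        dsimp only at hii
        rw [dif_pos (hb i hi), dif_pos (hb i' hi')] at hii
        have := congrArg (fun x : Fin n => (x : ℕ)) hii
        simp only at this
        have : i * p.2 = i' * p.2 := by omega
        exact Nat.eq_of_mul_eq_mul_right (by omega) this
    simpa using this
  -- card of each fiber
  have hFcard : ∀ p ∈ P, ∀ v : Fin c, (F p v).card ≤ c ^ (n - k) := by
    intro p hp v
    have hinj : (F p v).card ≤
        (Finset.univ : Finset ({j : Fin n // j ∉ A p} → Fin c)).card := by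
      apply Finset.card_le_card_of_injOn (fun χ => fun j => χ j.1)
      · intro _ _; exact Finset.mem_univ _
      · intro χ₁ h1 χ₂ h2 he
        rw [Finset.mem_coe] at h1 h2
        simp only [hF, Finset.mem_filter] at h1 h2
        funext j
        by_cases hj : j ∈ A p
        · rw [h1.2 j hj, h2.2 j hj]
        · exact congrFun he ⟨j, hj⟩
    have hcard : (Finset.univ : Finset ({j : Fin n // j ∉ A p} → Fin c)).card
        = c ^ (n - (A p).card) := by
      rw [Finset.card_univ, Fintype.card_fun, Fintype.card_fin]
      congr 1
      rw [Fintype.card_subtype_compl]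
      simp [Fintype.card_coe]
    calc (F p v).card ≤ c ^ (n - (A p).card) := by rw [← hcard]; exact hinj
      _ ≤ c ^ (n - k) := Nat.pow_le_pow_right hc0 (by have := hAcard p hp; omega)
  -- main counting
  have hcount : c ^ n ≤ P.card * c * c ^ (n - k) := by
    have h1 : (Finset.univ : Finset (Fin n → Fin c)).card = c ^ n := by
      rw [Finset.card_univ, Fintype.card_fun, Fintype.card_fin, Fintype.card_fin]
    calc c ^ n = (Finset.univ : Finset (Fin n → Fin c)).card := h1.symm
      _ ≤ ((P ×ˢ Finset.univ).biUnion (fun pv => F pv.1 pv.2)).card :=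
          Finset.card_le_card hcover
      _ ≤ ∑ pv ∈ P ×ˢ Finset.univ, (F pv.1 pv.2).card := Finset.card_biUnion_le
      _ ≤ ∑ _pv ∈ P ×ˢ (Finset.univ : Finset (Fin c)), c ^ (n - k) := by
          apply Finset.sum_le_sum
          intro pv hpv
          rw [Finset.mem_product] at hpv
          exact hFcard pv.1 hpv.1 pv.2
      _ = P.card * c * c ^ (n - k) := by
          rw [Finset.sum_const, Finset.card_product, Finset.card_univ, Fintype.card_fin]
          ring
  -- extract c^(k-1) ≤ P.card
  have hPc : c ^ (k - 1) ≤ P.card := by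
    have hsplit : c ^ n = c ^ (k - 1) * (c * c ^ (n - k)) := by
      rw [← pow_succ', ← pow_add]
      congr 1
      omega
    rw [hsplit] at hcount
    have hpos : 0 < c * c ^ (n - k) := Nat.mul_pos hc0 (pow_pos hc0 _)
    have := Nat.le_of_mul_le_mul_right (by linarith [hcount] : c ^ (k-1) * (c * c ^ (n-k)) ≤ P.card * (c * c ^ (n-k))) hpos
    exact this
  -- bound P.card
  have hPbound : (k - 1) * P.card ≤ n * n := by
    set m := (n - 1) / (k - 1) with hm
    have hsub : P ⊆ Finset.Icc 1 n ×ˢ Finset.Icc 1 m := by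
      intro p hp
      simp only [hP, Finset.mem_filter, Finset.mem_product, Finset.mem_Icc] at hp ⊢
      obtain ⟨⟨⟨ha1, han⟩, ⟨hd1, hdn⟩⟩, hle⟩ := hp
      refine ⟨⟨ha1, han⟩, hd1, ?_⟩
      rw [hm, Nat.le_div_iff_mul_le (by omega : 0 < k - 1), mul_comm]
      omega
    have h1 : P.card ≤ n * m := by
      calc P.card ≤ (Finset.Icc 1 n ×ˢ Finset.Icc 1 m).card := Finset.card_le_card hsub
        _ = n * m := by rw [Finset.card_product, Nat.card_Icc, Nat.card_Icc]; simp
    have h2 : (k - 1) * m ≤ n - 1 := by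
      rw [hm, mul_comm]
      exact Nat.div_mul_le_self _ _
    calc (k - 1) * P.card ≤ (k - 1) * (n * m) := Nat.mul_le_mul_left _ h1
      _ = n * ((k - 1) * m) := by ring
      _ ≤ n * (n - 1) := Nat.mul_le_mul_left _ h2
      _ ≤ n * n := Nat.mul_le_mul_left _ (by omega)
  calc (k - 1) * c ^ (k - 1) ≤ (k - 1) * P.card := Nat.mul_le_mul_left _ hPc
    _ ≤ n * n := hPbound


/-- If every c-coloring of {1,...,n} contains a monochromatic k-term arithmetic
progression, then ⌈log_c(n²/k)⌉ + 1 ≥ k. -/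
theorem ceil_logc_bound (k c n : ℕ) (hk : 2 ≤ k) (hc : 2 ≤ c)
    (h : ∀ χ : ℕ → Fin c, hasMonoAP c k n χ) :
    (k : ℤ) ≤ ⌈Real.logb c ((n : ℝ) ^ 2 / k)⌉ + 1 := by
  have key := vdw_counting k c n hk hc h
  have key2 : k * c ^ (k - 2) < n * n := by
    rcases eq_or_lt_of_le hk with hk2 | hk3
    · subst hk2
      simp only [Nat.sub_self, pow_zero, mul_one]
      have h1 : c ≤ n * n := by simpa using key
      have h2 : 2 ≤ n := by nlinarith
      nlinarith
    · have hpow : 0 < c ^ (k - 2) := pow_pos (by omega) _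
      have hstep : k * c ^ (k - 2) < (k - 1) * c ^ (k - 1) := by
        have : c ^ (k - 1) = c ^ (k - 2) * c := by
          rw [← pow_succ]
          congr 1
          omega
        rw [this]
        calc k * c ^ (k - 2) < 2 * (k - 1) * c ^ (k - 2) := by
              have : k < 2 * (k - 1) := by omega
              exact (Nat.mul_lt_mul_right hpow).mpr this
          _ ≤ (k - 1) * (c ^ (k - 2) * c) := by
              rw [show 2 * (k-1) * c ^ (k-2) = (k-1) * (c ^ (k-2) * 2) by ring]
              exact Nat.mul_le_mul_left _ (Nat.mul_le_mul_left _ hc)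
      omega
  have hn0 : 0 < n := by
    rcases Nat.eq_zero_or_pos n with h0 | h0
    · subst h0; simp at key2
    · exact h0
  have hk0 : (0:ℝ) < k := by positivity
  have hc1 : (1:ℝ) < c := by exact_mod_cast hc
  have hkey : (c:ℝ) ^ ((k:ℝ) - 2) < (n:ℝ) ^ 2 / k := by
    have h1 : (c:ℝ) ^ ((k:ℝ) - 2) = (c:ℝ) ^ (k - 2 : ℕ) := by
      rw [← Real.rpow_natCast]
      congr 1
      push_cast [Nat.cast_sub hk]
      ring
    rw [h1, lt_div_iff₀ hk0]
    have : (k:ℝ) * (c:ℝ) ^ (k - 2 : ℕ) < (n:ℝ) * n := by exact_mod_cast key2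
    calc (c:ℝ) ^ (k - 2 : ℕ) * k = k * (c:ℝ) ^ (k - 2 : ℕ) := by ring
      _ < (n:ℝ) * n := this
      _ = (n:ℝ) ^ 2 := by ring
  have hpos : (0:ℝ) < (n:ℝ) ^ 2 / k := by positivity
  have hlog : ((k:ℝ) - 2) < Real.logb c ((n:ℝ) ^ 2 / k) :=
    (Real.lt_logb_iff_rpow_lt hc1 hpos).mpr hkey
  have hceil : (k:ℤ) - 2 < ⌈Real.logb c ((n:ℝ) ^ 2 / k)⌉ := by
    apply Int.lt_ceil.mpr
    push_cast
    exact hlog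
  omega
end

section
/- For k ≥ 4 and c = 2, the van der Waerden number satisfies w(k;2) > 2^(k−4)/k · (k−1)/k. -/
namespace VdWAux
open Finset

def pt (n x : ℕ) : Fin (n + 1) := if h : x < n + 1 then ⟨x, h⟩ else ⟨0, Nat.succ_pos n⟩
lemma pt_val {n x : ℕ} (hx : x ≤ n) : (pt n x : ℕ) = x := by
  simp [pt, Nat.lt_succ_of_le hx]
lemma pt_inj {n x y : ℕ} (hx : x ≤ n) (hy : y ≤ n) (h : pt n x = pt n y) : x = y := by
  have := congrArg (Fin.val) h; rwa [pt_val hx, pt_val hy] at this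
def mono (k n : ℕ) (s : ℕ × ℕ) (χ : Fin (n + 1) → Fin 2) : Prop :=
  ∀ i < k, χ (pt n (s.1 + i * s.2)) = χ (pt n s.1)
instance (k n : ℕ) (s : ℕ × ℕ) : DecidablePred (mono k n s) := fun χ => by
  unfold mono; infer_instance
def APs (k n : ℕ) : Finset (ℕ × ℕ) :=
  (Finset.Icc 1 n ×ˢ Finset.Icc 1 n).filter fun s => s.1 + (k - 1) * s.2 ≤ n
def supp (k : ℕ) (s : ℕ × ℕ) : Finset ℕ := (range k).image fun i => s.1 + i * s.2
def good (k n : ℕ) (T : Finset (ℕ × ℕ)) : Finset (Fin (n + 1) → Fin 2) :=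
  univ.filter fun χ => ∀ s ∈ T, ¬ mono k n s χ
lemma mem_APs {k n : ℕ} {s : ℕ × ℕ} :
    s ∈ APs k n ↔ 1 ≤ s.1 ∧ 1 ≤ s.2 ∧ s.2 ≤ n ∧ s.1 ≤ n ∧ s.1 + (k - 1) * s.2 ≤ n := by
  simp only [APs, mem_filter, mem_product, Finset.mem_Icc]
  constructor
  · rintro ⟨⟨⟨h1, h2⟩, h3, h4⟩, h5⟩; exact ⟨h1, h3, h4, h2, h5⟩
  · rintro ⟨h1, h2, h3, h4, h5⟩; exact ⟨⟨⟨h1, h4⟩, h2, h3⟩, h5⟩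
lemma mem_good {k n : ℕ} {T : Finset (ℕ × ℕ)} {χ : Fin (n+1) → Fin 2} :
    χ ∈ good k n T ↔ ∀ s ∈ T, ¬ mono k n s χ := by
  simp [good]

lemma good_anti {k n : ℕ} {T T' : Finset (ℕ × ℕ)} (h : T ⊆ T') :
    good k n T' ⊆ good k n T := by
  intro χ hχ
  simp only [good, mem_filter, mem_univ, true_and] at *
  exact fun s hs => hχ s (h hs)

lemma good_insert {k n : ℕ} (s : ℕ × ℕ) (T : Finset (ℕ × ℕ)) :
    good k n (insert s T) = (good k n T).filter (fun χ => ¬ mono k n s χ) := by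
  ext χ
  simp only [good, mem_filter, mem_univ, true_and, mem_insert]
  constructor
  · intro h; exact ⟨fun t ht => h t (Or.inr ht), h s (Or.inl rfl)⟩
  · rintro ⟨h1, h2⟩ t (rfl | ht)
    · exact h2
    · exact h1 t ht

lemma good_card_split {k n : ℕ} (s : ℕ × ℕ) (T : Finset (ℕ × ℕ)) :
    (good k n T).card
      = (good k n (insert s T)).card + ((good k n T).filter (mono k n s)).card := by
  rw [good_insert]
  have := Finset.card_filter_add_card_filter_not (s := good k n T) (p := mono k n s)
  omega

lemma inj_lemma {k n : ℕ} (hk : 2 ≤ k) {s : ℕ × ℕ} (hs : s ∈ APs k n)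
    {T : Finset (ℕ × ℕ)} (hT : T ⊆ APs k n)
    (hdis : ∀ t ∈ T, Disjoint (supp k t) (supp k s)) :
    ((good k n T).filter (mono k n s)).card * 2 ^ (k - 1) ≤ (good k n T).card := by
  classical
  obtain ⟨a, d⟩ := s
  obtain ⟨ha1, hd1, -, -, hadn⟩ := mem_APs.mp hs
  replace ha1 : 1 ≤ a := ha1
  replace hd1 : 1 ≤ d := hd1
  replace hadn : a + (k - 1) * d ≤ n := hadn
  have hle : ∀ i : ℕ, i < k → a + i * d ≤ n := by
    intro i hi
    have : i * d ≤ (k - 1) * d := Nat.mul_le_mul_right d (by omega)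
    omega
  set q : Fin (k - 1) → Fin (n + 1) := fun i => pt n (a + ((i : ℕ) + 1) * d) with hqdef
  have hqle : ∀ i : Fin (k - 1), a + ((i : ℕ) + 1) * d ≤ n := by
    intro i; exact hle _ (by omega)
  have hqinj : Function.Injective q := by
    intro i i' h
    have h2 := pt_inj (hqle i) (hqle i') h
    have : ((i : ℕ) + 1) * d = ((i' : ℕ) + 1) * d := by omega
    have := Nat.eq_of_mul_eq_mul_right (by omega : 0 < d) this
    exact Fin.ext (by omega)
  have hqa : ∀ i : Fin (k - 1), q i ≠ pt n a := by
    intro i h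
    have h2 := pt_inj (hqle i) (by omega) h
    have : 1 * d ≤ ((i : ℕ) + 1) * d := Nat.mul_le_mul_right _ (by omega)
    omega
  set e : (Fin (n + 1) → Fin 2) × (Fin (k - 1) → Fin 2) → (Fin (n + 1) → Fin 2) :=
    fun p j => if h : ∃ i, q i = j then p.2 h.choose else p.1 j with hedef
  have e_at_q : ∀ p i, e p (q i) = p.2 i := by
    intro p i
    have h : ∃ i', q i' = q i := ⟨i, rfl⟩
    simp only [hedef, dif_pos h]
    exact congrArg p.2 (hqinj h.choose_spec)
  have e_at_other : ∀ p j, (∀ i, q i ≠ j) → e p j = p.1 j := by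
    intro p j hj
    simp only [hedef]
    exact dif_neg (not_exists.mpr hj)
  set S := (good k n T).filter (mono k n (a, d)) with hSdef
  have hcard : (S ×ˢ (univ : Finset (Fin (k - 1) → Fin 2))).card = S.card * 2 ^ (k - 1) := by
    simp [Finset.card_product]
  rw [← hcard]
  apply Finset.card_le_card_of_injOn e
  · -- maps to good
    rintro ⟨χ, v⟩ hp
    rw [Finset.mem_coe, Finset.mem_product] at hp
    obtain ⟨hχS, -⟩ := hp
    rw [hSdef, mem_filter] at hχS
    obtain ⟨hχg, hχm⟩ := hχS
    rw [Finset.mem_coe]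
    rw [mem_good] at hχg ⊢
    intro t ht hmt
    obtain ⟨hb1, he1, -, -, hben⟩ := mem_APs.mp (hT ht)
    have hagree : ∀ j : ℕ, j < k → e (χ, v) (pt n (t.1 + j * t.2)) = χ (pt n (t.1 + j * t.2)) := by
      intro j hj
      have hjle : t.1 + j * t.2 ≤ n := by
        have : j * t.2 ≤ (k - 1) * t.2 := Nat.mul_le_mul_right _ (by omega)
        omega
      apply e_at_other
      intro i hiq
      have := pt_inj (hqle i) hjle hiq
      have hmem1 : a + ((i : ℕ) + 1) * d ∈ supp k (a, d) :=
        Finset.mem_image.mpr ⟨(i : ℕ) + 1, Finset.mem_range.mpr (by omega), rfl⟩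
      have hmem2 : t.1 + j * t.2 ∈ supp k t :=
        Finset.mem_image.mpr ⟨j, Finset.mem_range.mpr hj, rfl⟩
      rw [this] at hmem1
      exact Finset.disjoint_left.mp (hdis t ht) hmem2 hmem1
    apply hχg t ht
    intro j hj
    show χ (pt n (t.1 + j * t.2)) = χ (pt n t.1)
    have ht1 : e (χ, v) (pt n t.1) = χ (pt n t.1) := by
      have h0 := hagree 0 (by omega)
      simpa using h0
    rw [← hagree j hj, ← ht1]
    exact hmt j hj
  · -- injective
    rintro ⟨χ, v⟩ hp ⟨χ', v'⟩ hp' heq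
    simp only [Finset.coe_product, Set.mem_prod, mem_coe] at hp hp'
    obtain ⟨hχS, -⟩ := hp
    obtain ⟨hχS', -⟩ := hp'
    rw [hSdef, mem_filter] at hχS hχS'
    have hva : ∀ i, v i = v' i := by
      intro i
      have h1 : (χ, v).2 i = (χ', v').2 i := by
        rw [← e_at_q (χ, v) i, ← e_at_q (χ', v') i, heq]
      exact h1
    have hqa' : ∀ i : Fin (k-1), q i ≠ pt n a := hqa
    have hea : e (χ, v) (pt n a) = χ (pt n a) := e_at_other _ _ (fun i => hqa i)
    have hea' : e (χ', v') (pt n a) = χ' (pt n a) := e_at_other _ _ (fun i => hqa i)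
    have hχa : χ (pt n a) = χ' (pt n a) := by rw [← hea, ← hea', heq]
    have hχ : χ = χ' := by
      funext j
      by_cases h : ∃ i, q i = j
      · obtain ⟨i, rfl⟩ := h
        have m1 : χ (q i) = χ (pt n a) := hχS.2 ((i : ℕ) + 1) (by omega)
        have m2 : χ' (q i) = χ' (pt n a) := hχS'.2 ((i : ℕ) + 1) (by omega)
        rw [m1, m2, hχa]
      · push_neg at h
        have h1 := e_at_other (χ, v) j h
        have h2 := e_at_other (χ', v') j h
        have h3 := congrFun heq j
        rw [h1, h2] at h3
        exact h3
    exact Prod.ext hχ (funext hva)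


lemma neighbor_card {k n : ℕ} (hk : 2 ≤ k) (s : ℕ × ℕ) :
    (((APs k n).filter (fun t => ¬ Disjoint (supp k t) (supp k s))).card)
      ≤ k * (k * ((n - 1) / (k - 1))) := by
  classical
  have hsub : (APs k n).filter (fun t => ¬ Disjoint (supp k t) (supp k s)) ⊆
      ((range k ×ˢ (range k ×ˢ Finset.Icc 1 ((n - 1) / (k - 1)))).image
        fun p => (s.1 + p.1 * s.2 - p.2.1 * p.2.2, p.2.2)) := by
    intro t ht
    rw [mem_filter] at ht
    obtain ⟨htAP, hnd⟩ := ht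
    obtain ⟨x, hxt, hxs⟩ := Finset.not_disjoint_iff.mp hnd
    obtain ⟨it, hit, hxt'⟩ := Finset.mem_image.mp hxt
    obtain ⟨is, his, hxs'⟩ := Finset.mem_image.mp hxs
    obtain ⟨hb1, he1, -, -, hben⟩ := mem_APs.mp htAP
    apply Finset.mem_image.mpr
    refine ⟨(is, (it, t.2)), ?_, ?_⟩
    · rw [Finset.mem_product, Finset.mem_product, Finset.mem_Icc]
      refine ⟨his, hit, he1, ?_⟩
      rw [Nat.le_div_iff_mul_le (by omega : 0 < k - 1)]
      show t.2 * (k - 1) ≤ n - 1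
      rw [Nat.mul_comm]
      omega
    · show (s.1 + is * s.2 - it * t.2, t.2) = t
      have : s.1 + is * s.2 = t.1 + it * t.2 := by rw [hxs', hxt']
      rw [this]
      simp
  calc _ ≤ _ := Finset.card_le_card hsub
    _ ≤ ((range k ×ˢ (range k ×ˢ Finset.Icc 1 ((n - 1) / (k - 1)))).card) :=
        Finset.card_image_le
    _ = k * (k * ((n - 1) / (k - 1))) := by
        simp [Finset.card_product, Nat.card_Icc]

lemma main_bound {k n : ℕ} (hk : 4 ≤ k)
    (hD : 8 * (k * (k * ((n - 1) / (k - 1)))) ≤ 2 ^ k) :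
    ∀ m : ℕ, ∀ T ⊆ APs k n, T.card = m → ∀ s ∈ APs k n, s ∉ T →
      (((good k n T).filter (mono k n s)).card : ℝ)
        ≤ 4 / 2 ^ k * ((good k n T).card : ℝ) := by
  intro m
  induction m using Nat.strong_induction_on with
  | _ m IH =>
  intro T hT hTcard s hsAP hsT
  set x : ℝ := 4 / 2 ^ k with hxdef
  have h2kpos : (0 : ℝ) < 2 ^ k := by positivity
  have h2k : (16 : ℝ) ≤ 2 ^ k := by
    calc (16 : ℝ) = 2 ^ 4 := by norm_num
    _ ≤ 2 ^ k := by apply pow_le_pow_right₀ (by norm_num) hk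
  have hx0 : 0 < x := by positivity
  have hx14 : x ≤ 1 / 4 := by rw [hxdef, div_le_iff₀ h2kpos]; nlinarith
  have hx1 : x < 1 := by linarith
  set T₁ := T.filter (fun t => ¬ Disjoint (supp k t) (supp k s)) with hT1
  set T₂ := T.filter (fun t => Disjoint (supp k t) (supp k s)) with hT2
  have hT2T : T₂ ⊆ T := filter_subset _ _
  have hT1D : T₁.card ≤ k * (k * ((n - 1) / (k - 1))) := by
    apply le_trans (Finset.card_le_card (filter_subset_filter _ hT)) (neighbor_card (by omega) s)
  have chain : ∀ r : ℕ, ∀ U : Finset (ℕ × ℕ), T₂ ⊆ U → U ⊆ T → (U \ T₂).card = r →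
      (1 - x) ^ r * ((good k n T₂).card : ℝ) ≤ ((good k n U).card : ℝ) := by
    intro r
    induction r with
    | zero =>
      intro U hU1 hU2 hU3
      have hUT : U = T₂ :=
        Finset.Subset.antisymm (Finset.sdiff_eq_empty_iff_subset.mp
          (Finset.card_eq_zero.mp hU3)) hU1
      rw [hUT, pow_zero, one_mul]
    | succ r ih =>
      intro U hU1 hU2 hU3
      have hne : (U \ T₂).Nonempty := Finset.card_pos.mp (by omega)
      obtain ⟨t, htmem⟩ := hne
      rw [Finset.mem_sdiff] at htmem
      obtain ⟨htU, htT₂⟩ := htmem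
      set U' := U.erase t with hU'def
      have hT₂U' : T₂ ⊆ U' := fun u hu =>
        Finset.mem_erase.mpr ⟨fun h => htT₂ (h ▸ hu), hU1 hu⟩
      have hU'T : U' ⊆ T := (Finset.erase_subset _ _).trans hU2
      have hU'card : (U' \ T₂).card = r := by
        have hcomm : U' \ T₂ = (U \ T₂).erase t := by
          ext u
          simp only [hU'def, Finset.mem_sdiff, Finset.mem_erase]
          tauto
        rw [hcomm, Finset.card_erase_of_mem (Finset.mem_sdiff.mpr ⟨htU, htT₂⟩), hU3]
        omega
      have hU'ltm : U'.card < m := by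
        have h1 : U'.card < U.card := Finset.card_erase_lt_of_mem htU
        have h2 : U.card ≤ T.card := Finset.card_le_card hU2
        omega
      have hstep := IH U'.card hU'ltm U' (hU'T.trans hT) rfl t (hT (hU2 htU))
        (Finset.notMem_erase t U)
      have hsplit := good_card_split (k := k) (n := n) t U'
      rw [Finset.insert_erase htU] at hsplit
      have hsplitR : ((good k n U).card : ℝ)
          = (good k n U').card - ((good k n U').filter (mono k n t)).card := by
        rw [hsplit]; push_cast; ring
      have hstep2 : (1 - x) * ((good k n U').card : ℝ) ≤ ((good k n U).card : ℝ) := by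
        rw [hsplitR]; ring_nf; ring_nf at hstep; linarith
      calc (1 - x) ^ (r + 1) * ((good k n T₂).card : ℝ)
          = (1 - x) * ((1 - x) ^ r * ((good k n T₂).card : ℝ)) := by ring
        _ ≤ (1 - x) * ((good k n U').card : ℝ) := by
            apply mul_le_mul_of_nonneg_left (ih U' hT₂U' hU'T hU'card) (by linarith)
        _ ≤ _ := hstep2
  have hTsplit : T \ T₂ = T₁ := by
    ext u
    simp only [hT1, hT2, Finset.mem_sdiff, Finset.mem_filter]
    tauto
  have hchainT := chain T₁.card T hT2T (Finset.Subset.refl T) (by rw [hTsplit])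
  have hbern : (1 : ℝ) - T₁.card * x ≤ (1 - x) ^ T₁.card := by
    have h := one_add_mul_le_pow (a := -x) (by linarith) T₁.card
    have h2 : (1 : ℝ) + T₁.card * (-x) = 1 - T₁.card * x := by ring
    rw [h2] at h
    simpa [← sub_eq_add_neg] using h
  have hDx : (T₁.card : ℝ) * x ≤ 1 / 2 := by
    have h8 : 8 * T₁.card ≤ 2 ^ k := le_trans (by omega) hD
    have hcast : (8 : ℝ) * T₁.card ≤ 2 ^ k := by exact_mod_cast h8
    calc (T₁.card : ℝ) * x = 4 * T₁.card / 2 ^ k := by rw [hxdef]; ring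
      _ ≤ 1 / 2 := by rw [div_le_iff₀ h2kpos]; linarith
  have hhalf : (1 / 2 : ℝ) ≤ (1 - x) ^ T₁.card := by linarith
  have hG2 : ((good k n T₂).card : ℝ) ≤ 2 * ((good k n T).card : ℝ) := by
    have h1 : (1 / 2 : ℝ) * ((good k n T₂).card : ℝ)
        ≤ (1 - x) ^ T₁.card * ((good k n T₂).card : ℝ) :=
      mul_le_mul_of_nonneg_right hhalf (by positivity)
    linarith
  have hdis2 : ∀ t ∈ T₂, Disjoint (supp k t) (supp k s) := by
    intro t ht
    exact (Finset.mem_filter.mp ht).2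
  have hinj := inj_lemma (by omega : 2 ≤ k) hsAP (hT2T.trans hT) hdis2
  have hinjR : (((good k n T₂).filter (mono k n s)).card : ℝ) * 2 ^ (k - 1)
      ≤ ((good k n T₂).card : ℝ) := by exact_mod_cast hinj
  have hmon : ((good k n T).filter (mono k n s)).card
      ≤ ((good k n T₂).filter (mono k n s)).card :=
    Finset.card_le_card (Finset.filter_subset_filter _ (good_anti hT2T))
  have hmonR : (((good k n T).filter (mono k n s)).card : ℝ)
      ≤ (((good k n T₂).filter (mono k n s)).card : ℝ) := by exact_mod_cast hmon
  have hP : (0 : ℝ) < 2 ^ (k - 1) := by positivity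
  have hP2 : (2 : ℝ) ^ k = 2 ^ (k - 1) * 2 := by
    rw [← pow_succ]
    congr 1
    omega
  have hxP : x * 2 ^ (k - 1) = 2 := by
    rw [hxdef, hP2]
    field_simp
    ring
  have key : (((good k n T).filter (mono k n s)).card : ℝ) * 2 ^ (k - 1)
      ≤ (x * ((good k n T).card : ℝ)) * 2 ^ (k - 1) := by
    calc (((good k n T).filter (mono k n s)).card : ℝ) * 2 ^ (k - 1)
        ≤ (((good k n T₂).filter (mono k n s)).card : ℝ) * 2 ^ (k - 1) :=
          mul_le_mul_of_nonneg_right hmonR (le_of_lt hP)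
      _ ≤ ((good k n T₂).card : ℝ) := hinjR
      _ ≤ 2 * ((good k n T).card : ℝ) := hG2
      _ = (x * ((good k n T).card : ℝ)) * 2 ^ (k - 1) := by
          rw [mul_comm x, mul_assoc, hxP, mul_comm]
  exact le_of_mul_le_mul_right key hP

lemma good_pos {k n : ℕ} (hk : 4 ≤ k)
    (hD : 8 * (k * (k * ((n - 1) / (k - 1)))) ≤ 2 ^ k) :
    ∀ m : ℕ, ∀ T ⊆ APs k n, T.card = m → 0 < ((good k n T).card : ℝ) := by
  intro m
  induction m using Nat.strong_induction_on with
  | _ m IH =>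
  intro T hT hTcard
  rcases Finset.eq_empty_or_nonempty T with rfl | hne
  · have hgu : good k n ∅ = univ := by simp [good]
    rw [hgu]
    have : (0 : ℕ) < (univ : Finset (Fin (n + 1) → Fin 2)).card :=
      Finset.card_pos.mpr ⟨fun _ => 0, Finset.mem_univ _⟩
    exact_mod_cast this
  · obtain ⟨t, ht⟩ := hne
    set T' := T.erase t with hT'def
    have h1 : T'.card < m := hTcard ▸ Finset.card_erase_lt_of_mem ht
    have hT'sub : T' ⊆ APs k n := (Finset.erase_subset _ _).trans hT
    have hpos := IH T'.card h1 T' hT'sub rfl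
    have hbound := main_bound hk hD T'.card T' hT'sub rfl t (hT ht) (Finset.notMem_erase t T)
    have hsplit := good_card_split (k := k) (n := n) t T'
    rw [Finset.insert_erase ht] at hsplit
    have h2kpos : (0 : ℝ) < 2 ^ k := by positivity
    have h2k : (16 : ℝ) ≤ 2 ^ k := by
      calc (16 : ℝ) = 2 ^ 4 := by norm_num
      _ ≤ 2 ^ k := by apply pow_le_pow_right₀ (by norm_num) hk
    have hx1 : 4 / (2 : ℝ) ^ k < 1 := by rw [div_lt_one h2kpos]; linarith
    have hsplitR : ((good k n T).card : ℝ)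
        = (good k n T').card - ((good k n T').filter (mono k n t)).card := by
      rw [hsplit]; push_cast; ring
    have : (1 - 4 / (2 : ℝ) ^ k) * ((good k n T').card : ℝ) ≤ ((good k n T).card : ℝ) := by
      rw [hsplitR]; nlinarith
    nlinarith

lemma exists_good_coloring {k n : ℕ} (hk : 4 ≤ k)
    (hD : 8 * (k * (k * ((n - 1) / (k - 1)))) ≤ 2 ^ k) :
    ∃ χ : ℕ → Fin 2, ¬ hasMonoAP 2 k n χ := by
  have hpos := good_pos hk hD (APs k n).card (APs k n) (Finset.Subset.refl _) rfl
  have hpos' : 0 < (good k n (APs k n)).card := by exact_mod_cast hpos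
  obtain ⟨χ, hχ⟩ := Finset.card_pos.mp hpos'
  rw [mem_good] at hχ
  refine ⟨fun m => χ (pt n m), ?_⟩
  rintro ⟨a, d, ha, hd, hle, hmono⟩
  have hdk : d ≤ (k - 1) * d := by
    calc d = 1 * d := (one_mul d).symm
    _ ≤ (k - 1) * d := Nat.mul_le_mul_right d (by omega)
  have hAP : (a, d) ∈ APs k n := mem_APs.mpr ⟨ha, hd, by omega, by omega, hle⟩
  exact hχ (a, d) hAP (fun i hi => hmono i hi)

lemma vdw_set_nonempty (k : ℕ) (hk : 1 ≤ k) :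
    {n | ∀ χ : ℕ → Fin 2, hasMonoAP 2 k n χ}.Nonempty := by
  classical
  obtain ⟨ι, _inst, hHJ⟩ := Combinatorics.Line.exists_mono_in_high_dimension (Fin k) (Fin 2)
  refine ⟨1 + Fintype.card ι * (k - 1), fun χ => ?_⟩
  obtain ⟨l, c, hc⟩ := hHJ fun v => χ (1 + ∑ i, (v i : ℕ))
  have hc' : ∀ x : Fin k, χ (1 + ∑ i, ((l x i : Fin k) : ℕ)) = c := hc
  set M : Finset ι := Finset.univ.filter (fun i => l.idxFun i = none) with hM
  set c₀ : ℕ := ∑ i ∈ Mᶜ, ((l.idxFun i).map (fun (y : Fin k) => (y : ℕ))).getD 0 with hc₀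
  have hsum : ∀ x : Fin k, (∑ i, ((l x i : Fin k) : ℕ)) = M.card * (x : ℕ) + c₀ := by
    intro x
    rw [← Finset.sum_add_sum_compl M]
    congr 1
    · rw [Finset.sum_congr rfl (fun i hi => ?_), Finset.sum_const, smul_eq_mul]
      rw [hM, Finset.mem_filter] at hi
      rw [l.apply_none _ _ hi.2]
    · apply Finset.sum_congr rfl
      intro i hi
      rw [hM, Finset.compl_filter, Finset.mem_filter] at hi
      obtain ⟨y, hy⟩ := Option.ne_none_iff_exists.mp hi.2
      rw [l.apply_some hy.symm, ← hy]
      rfl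
  have hcolor : ∀ x : Fin k, χ (1 + (M.card * (x : ℕ) + c₀)) = c := by
    intro x
    rw [← hsum x]
    exact hc' x
  have hub : ∀ x : Fin k, M.card * (x : ℕ) + c₀ ≤ Fintype.card ι * (k - 1) := by
    intro x
    rw [← hsum x]
    calc (∑ i, ((l x i : Fin k) : ℕ)) ≤ ∑ _i : ι, (k - 1) := by
          apply Finset.sum_le_sum
          intro i _
          have := (l x i).is_lt
          omega
      _ = Fintype.card ι * (k - 1) := by
          rw [Finset.sum_const, smul_eq_mul, Finset.card_univ]
  have hd : 1 ≤ M.card := by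
    apply Finset.card_pos.mpr
    exact ⟨l.proper.choose, Finset.mem_filter.mpr ⟨Finset.mem_univ _, l.proper.choose_spec⟩⟩
  have hx0 : χ (1 + c₀) = c := by
    have h0 := hcolor ⟨0, by omega⟩
    simpa using h0
  refine ⟨1 + c₀, M.card, by omega, hd, ?_, ?_⟩
  · have hlast := hub ⟨k - 1, by omega⟩
    have hcomm : M.card * ((⟨k - 1, by omega⟩ : Fin k) : ℕ) = (k - 1) * M.card :=
      Nat.mul_comm _ _
    rw [hcomm] at hlast
    omega
  · intro i hi
    have hcx := hcolor ⟨i, hi⟩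
    have harg : 1 + (M.card * ((⟨i, hi⟩ : Fin k) : ℕ) + c₀) = 1 + c₀ + i * M.card := by
      show 1 + (M.card * i + c₀) = 1 + c₀ + i * M.card
      rw [Nat.mul_comm]
      omega
    rw [harg] at hcx
    rw [hcx, hx0]

end VdWAux

/-- For k ≥ 4, the 2-color van der Waerden number satisfies
w(k;2) > 2^(k-4)/k · (k-1)/k. -/
theorem vdW_two_color_lower (k : ℕ) (hk : 4 ≤ k) :
    (2 : ℝ) ^ (k - 4) / k * (((k : ℝ) - 1) / k) < (vdW k 2 : ℝ) := by
  have hne := VdWAux.vdw_set_nonempty k (by omega)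
  have hmem : vdW k 2 ∈ {n | ∀ χ : ℕ → Fin 2, hasMonoAP 2 k n χ} := Nat.sInf_mem hne
  by_contra hcon
  push_neg at hcon
  set n := vdW k 2 with hn
  have hkposR : (0 : ℝ) < k := by
    have : (0 : ℕ) < k := by omega
    exact_mod_cast this
  have hR : (k : ℝ) * k * n ≤ 2 ^ (k - 4) * ((k : ℝ) - 1) := by
    have h1 := mul_le_mul_of_nonneg_left hcon (by positivity : (0 : ℝ) ≤ (k : ℝ) * k)
    calc (k : ℝ) * k * n = (k : ℝ) * k * n := rfl
      _ ≤ (k : ℝ) * k * (2 ^ (k - 4) / k * (((k : ℝ) - 1) / k)) := h1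
      _ = 2 ^ (k - 4) * ((k : ℝ) - 1) := by field_simp
  have hk1 : ((k - 1 : ℕ) : ℝ) = (k : ℝ) - 1 := by
    have : 1 ≤ k := by omega
    push_cast [Nat.cast_sub this]
    ring
  rw [← hk1] at hR
  have hN : k * k * n ≤ 2 ^ (k - 4) * (k - 1) := by exact_mod_cast hR
  have hD : 8 * (k * (k * ((n - 1) / (k - 1)))) ≤ 2 ^ k := by
    have h1 : k * (k * ((n - 1) / (k - 1))) ≤ 2 ^ (k - 4) := by
      have h2 : k * (k * ((n - 1) / (k - 1))) * (k - 1) ≤ k * k * (n - 1) := by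
        have hdm := Nat.div_mul_le_self (n - 1) (k - 1)
        calc k * (k * ((n - 1) / (k - 1))) * (k - 1)
            = k * k * ((n - 1) / (k - 1) * (k - 1)) := by ring
          _ ≤ k * k * (n - 1) := Nat.mul_le_mul_left _ hdm
      have h3 : k * k * (n - 1) ≤ 2 ^ (k - 4) * (k - 1) :=
        le_trans (Nat.mul_le_mul_left _ (by omega)) hN
      exact Nat.le_of_mul_le_mul_right (le_trans h2 h3) (by omega)
    calc 8 * (k * (k * ((n - 1) / (k - 1)))) ≤ 8 * 2 ^ (k - 4) :=
          Nat.mul_le_mul_left _ h1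
      _ = 2 ^ 3 * 2 ^ (k - 4) := by norm_num
      _ = 2 ^ (k - 1) := by rw [← pow_add]; congr 1; omega
      _ ≤ 2 ^ k := Nat.pow_le_pow_right (by norm_num) (by omega)
  obtain ⟨χ, hχ⟩ := VdWAux.exists_good_coloring hk hD
  exact hχ (hmem χ)
end

section
/- Let k ≥ 2 and n ≥ k, and suppose 2^(k−3) > k²·n/(k−1). Then there is no injection from the set of 2-colorings of {1,...,n} to the set of triples (index of a progression among at most k²·n/(k−1) options, color bit, 2-coloring of {1,...,n−k}) — hence the compression scheme encoding each step with ⌈log₂(k²n/(k−1))⌉+3 bits while deleting k bits cannot be injective, so some 2-coloring of {1,...,n} has no monochromatic k-term arithmetic progression. -/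
set_option linter.unusedSectionVars false
set_option maxHeartbeats 1000000

open Finset

namespace VdWLLL

abbrev Om (n : ℕ) := Fin n → Fin 2

lemma card_om (n : ℕ) : Fintype.card (Om n) = 2 ^ n := by
  simp [Fintype.card_fun]

section Core
variable {n : ℕ} {I : Type*} [DecidableEq I]

lemma indep (T : Finset (Fin n)) (E F : Finset (Om n))
    (hE : ∀ f g : Om n, (∀ v ∈ T, f v = g v) → f ∈ E → g ∈ E)
    (hF : ∀ f g : Om n, (∀ v ∉ T, f v = g v) → f ∈ F → g ∈ F) :
    (E ∩ F).card * 2 ^ n = E.card * F.card := by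
  classical
  have key : ((E ∩ F) ×ˢ (univ : Finset (Om n))).card = (E ×ˢ F).card := by
    apply Finset.card_bij'
      (i := fun (p : Om n × Om n) (_ : p ∈ (E ∩ F) ×ˢ univ) =>
        ((fun v => if v ∈ T then p.1 v else p.2 v), (fun v => if v ∈ T then p.2 v else p.1 v)))
      (j := fun (p : Om n × Om n) (_ : p ∈ E ×ˢ F) =>
        ((fun v => if v ∈ T then p.1 v else p.2 v), (fun v => if v ∈ T then p.2 v else p.1 v)))
    · intro p hp
      simp only [Finset.mem_product, Finset.mem_inter] at hp
      simp only [Finset.mem_product]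
      constructor
      · exact hE p.1 _ (fun v hv => by simp [hv]) hp.1.1
      · exact hF p.1 _ (fun v hv => by simp [hv]) hp.1.2
    · intro p hp
      simp only [Finset.mem_product] at hp
      simp only [Finset.mem_product, Finset.mem_inter]
      refine ⟨⟨hE p.1 _ (fun v hv => by simp [hv]) hp.1, hF p.2 _ (fun v hv => by simp [hv]) hp.2⟩, Finset.mem_univ _⟩
    · intro p hp
      ext v <;> by_cases hv : v ∈ T <;> simp [hv]
    · intro p hp
      ext v <;> by_cases hv : v ∈ T <;> simp [hv]
  rw [Finset.card_product, Finset.card_product, Finset.card_univ, card_om] at key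
  exact key

def avoid (E : I → Finset (Om n)) (S : Finset I) : Finset (Om n) :=
  univ.filter (fun ω => ∀ s ∈ S, ω ∉ E s)

lemma avoid_empty (E : I → Finset (Om n)) : avoid E (∅ : Finset I) = univ := by
  simp [avoid]

lemma avoid_insert (E : I → Finset (Om n)) (s : I) (S : Finset I) :
    avoid E (insert s S) = avoid E S \ E s := by
  ext ω; simp [avoid, mem_sdiff]; tauto

lemma avoid_anti (E : I → Finset (Om n)) {S T : Finset I} (h : S ⊆ T) :
    avoid E T ⊆ avoid E S := by
  intro ω hω; simp only [avoid, mem_filter] at *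
  exact ⟨hω.1, fun s hs => hω.2 s (h hs)⟩

lemma card_avoid_insert (E : I → Finset (Om n)) (s : I) (S : Finset I) :
    ((avoid E (insert s S)).card : ℝ)
      = (avoid E S).card - ((E s ∩ avoid E S).card : ℝ) := by
  rw [avoid_insert]
  have : avoid E S \ E s = avoid E S \ (avoid E S ∩ E s) := by
    ext ω; simp [mem_sdiff]
  have hle : (avoid E S ∩ E s).card ≤ (avoid E S).card := card_le_card inter_subset_left
  rw [this, card_sdiff_of_subset inter_subset_left, Nat.cast_sub hle, Finset.inter_comm (E s) (avoid E S)]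

lemma lll_main (E : I → Finset (Om n)) (Γ : I → Finset I) (p : ℝ)
    (hp : 0 ≤ p) (hself : ∀ t, t ∈ Γ t)
    (hcard : ∀ t, ((E t).card : ℝ) ≤ p * 2 ^ n)
    (hD : ∀ t, 4 * p * (Γ t).card ≤ 1)
    (hind : ∀ t (S : Finset I), (∀ s ∈ S, s ∉ Γ t) →
      (((E t ∩ avoid E S).card : ℝ)) * 2 ^ n ≤ ((E t).card : ℝ) * (avoid E S).card) :
    ∀ (S : Finset I) (t : I), t ∉ S →
      ((E t ∩ avoid E S).card : ℝ) ≤ 2 * p * (avoid E S).card := by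
  have hhalf : ∀ t : I, 2 * p * (Γ t).card ≤ 1 / 2 := by
    intro t
    have := hD t
    linarith
  intro S
  induction S using Finset.strongInduction with
  | _ S ih =>
    intro t ht
    -- p ≤ 1/4 from hD at t
    have hΓ1 : (1 : ℝ) ≤ (Γ t).card := by
      have : 1 ≤ (Γ t).card := card_pos.mpr ⟨t, hself t⟩
      exact_mod_cast this
    have hp4 : 2 * p ≤ 1 / 2 := by
      have := hhalf t
      nlinarith
    have h1mp : (1 : ℝ) / 2 ≤ 1 - 2 * p := by linarith
    set S1 := S ∩ Γ t with hS1
    set S2 := S \ Γ t with hS2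
    have hunion : S2 ∪ S1 = S := by
      rw [hS1, hS2]; ext x; simp only [mem_union, mem_inter, mem_sdiff]; tauto
    have hdisj2 : ∀ s ∈ S2, s ∉ Γ t := fun s hs => (Finset.mem_sdiff.mp hs).2
    -- Step A
    have stepA : ((E t ∩ avoid E S2).card : ℝ) ≤ p * (avoid E S2).card := by
      have h1 := hind t S2 hdisj2
      have h2 : ((E t).card : ℝ) * (avoid E S2).card ≤ p * 2 ^ n * (avoid E S2).card := by
        apply mul_le_mul_of_nonneg_right (hcard t) (by positivity)
      have hpow : (0 : ℝ) < 2 ^ n := by positivity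
      nlinarith [hpow]
    -- Step B
    have stepB : ∀ T : Finset I, T ⊆ S1 →
        (1 - 2 * p) ^ T.card * ((avoid E S2).card : ℝ) ≤ (avoid E (S2 ∪ T)).card := by
      intro T
      induction T using Finset.induction_on with
      | empty => intro _; simp
      | @insert s T hs ihT =>
        intro hsub
        have hTsub : T ⊆ S1 := fun x hx => hsub (mem_insert_of_mem hx)
        have hsS1 : s ∈ S1 := hsub (mem_insert_self s T)
        have hsΓ : s ∈ Γ t := (mem_inter.mp hsS1).2
        have hsnot : s ∉ S2 ∪ T := by
          simp only [mem_union]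
          rintro (h1 | h1)
          · exact (mem_sdiff.mp h1).2 hsΓ
          · exact hs h1
        have hsub2 : S2 ∪ T ⊆ S := by
          rw [← hunion]
          exact union_subset_union (Finset.Subset.refl _) hTsub
        have hproper : S2 ∪ T ⊂ S := by
          rw [Finset.ssubset_iff_of_subset hsub2]
          exact ⟨s, (mem_inter.mp hsS1).1, hsnot⟩
        have hrec := ih (S2 ∪ T) hproper s hsnot
        have hcd := card_avoid_insert E s (S2 ∪ T)
        have : ((avoid E (S2 ∪ insert s T)).card : ℝ)
            ≥ (1 - 2 * p) * (avoid E (S2 ∪ T)).card := by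
          rw [Finset.union_insert, hcd]
          nlinarith [hrec]
        have hT := ihT hTsub
        rw [card_insert_of_notMem hs]
        calc (1 - 2*p) ^ (T.card + 1) * ((avoid E S2).card : ℝ)
            = (1 - 2*p) * ((1 - 2*p) ^ T.card * (avoid E S2).card) := by ring
          _ ≤ (1 - 2*p) * (avoid E (S2 ∪ T)).card := by
              apply mul_le_mul_of_nonneg_left hT (by linarith)
          _ ≤ (avoid E (S2 ∪ insert s T)).card := this
    -- Bernoulli
    have hS1card : (S1.card : ℝ) ≤ (Γ t).card := by
      exact_mod_cast card_le_card (inter_subset_right)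
    have bern : (1 : ℝ) / 2 ≤ (1 - 2 * p) ^ S1.card := by
      have hber : 1 + (S1.card : ℝ) * (-(2*p)) ≤ (1 + (-(2*p))) ^ S1.card := by
        apply one_add_mul_le_pow (by linarith)
      have : (1 : ℝ) / 2 ≤ 1 + (S1.card : ℝ) * (-(2*p)) := by
        have h1 : (S1.card : ℝ) * (2 * p) ≤ (Γ t).card * (2*p) := by
          apply mul_le_mul_of_nonneg_right hS1card (by linarith)
        have := hhalf t
        nlinarith
      calc (1:ℝ)/2 ≤ 1 + (S1.card : ℝ) * (-(2*p)) := this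
        _ ≤ (1 + (-(2*p))) ^ S1.card := hber
        _ = (1 - 2*p) ^ S1.card := by ring_nf
    have hBfull := stepB S1 (Finset.Subset.refl _)
    rw [hunion] at hBfull
    have hS2le : ((avoid E S2).card : ℝ) ≤ 2 * (avoid E S).card := by
      have h0 : (0:ℝ) ≤ (avoid E S2).card := by positivity
      nlinarith [hBfull, bern]
    have hmono : ((E t ∩ avoid E S).card : ℝ) ≤ ((E t ∩ avoid E S2).card : ℝ) := by
      have : E t ∩ avoid E S ⊆ E t ∩ avoid E S2 := by
        apply inter_subset_inter (Finset.Subset.refl _)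
        apply avoid_anti
        rw [hS2]; exact sdiff_subset
      exact_mod_cast card_le_card this
    calc ((E t ∩ avoid E S).card : ℝ) ≤ ((E t ∩ avoid E S2).card : ℝ) := hmono
      _ ≤ p * (avoid E S2).card := stepA
      _ ≤ p * (2 * (avoid E S).card) := mul_le_mul_of_nonneg_left hS2le hp
      _ = 2 * p * (avoid E S).card := by ring

lemma avoid_pos {n : ℕ} {I : Type*} [DecidableEq I]
    (E : I → Finset (Om n)) (Γ : I → Finset I) (p : ℝ)
    (hp : 0 ≤ p) (hself : ∀ t, t ∈ Γ t)
    (hcard : ∀ t, ((E t).card : ℝ) ≤ p * 2 ^ n)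
    (hD : ∀ t, 4 * p * (Γ t).card ≤ 1)
    (hind : ∀ t (S : Finset I), (∀ s ∈ S, s ∉ Γ t) →
      (((E t ∩ avoid E S).card : ℝ)) * 2 ^ n ≤ ((E t).card : ℝ) * (avoid E S).card) :
    ∀ S : Finset I, 0 < ((avoid E S).card : ℝ) := by
  have main := lll_main E Γ p hp hself hcard hD hind
  intro S
  induction S using Finset.induction_on with
  | empty =>
    rw [avoid_empty]
    rw [Finset.card_univ, VdWLLL.card_om]
    positivity
  | @insert t S ht ih =>
    have h1 := card_avoid_insert E t S
    have h2 := main S t ht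
    have hΓ1 : (1 : ℝ) ≤ (Γ t).card := by
      exact_mod_cast Finset.card_pos.mpr ⟨t, hself t⟩
    have hp4 : 2 * p ≤ 1 / 2 := by nlinarith [hD t]
    rw [h1]
    nlinarith


end Core

def ev (ω : Om n) (m : ℕ) : Fin 2 := if h : m - 1 < n then ω ⟨m - 1, h⟩ else 0

section Inst

variable (k n : ℕ)

def valid (t : ℕ × ℕ) : Prop := 1 ≤ t.1 ∧ 1 ≤ t.2 ∧ t.1 + (k - 1) * t.2 ≤ n

instance : DecidablePred (valid k n) := fun t => by unfold valid; infer_instance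

def Ev (t : ℕ × ℕ) : Finset (Om n) :=
  univ.filter (fun ω => valid k n t ∧ ∀ i < k, ev ω (t.1 + i * t.2) = ev ω t.1)

def D0 : ℕ := (n - 1) / (k - 1)

def Gam (t : ℕ × ℕ) : Finset (ℕ × ℕ) :=
  insert t (((range k ×ˢ range k) ×ˢ Icc 1 (D0 k n)).image
    (fun q => (t.1 + q.1.1 * t.2 - q.1.2 * q.2, q.2)))

def C (t : ℕ × ℕ) : Finset (Fin n) :=
  univ.filter (fun v => ∃ i < k, (v : ℕ) + 1 = t.1 + i * t.2)

variable {k n}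

lemma valid_pt (hk : 2 ≤ k) {t : ℕ × ℕ} (ht : valid k n t) {i : ℕ} (hi : i < k) :
    1 ≤ t.1 + i * t.2 ∧ t.1 + i * t.2 ≤ n := by
  obtain ⟨h1, h2, h3⟩ := ht
  have : i * t.2 ≤ (k - 1) * t.2 := Nat.mul_le_mul_right _ (by omega)
  omega

lemma ev_eq (hk : 2 ≤ k) {t : ℕ × ℕ} (ht : valid k n t) {i : ℕ} (hi : i < k) (ω : Om n) :
    ∃ hlt : t.1 + i * t.2 - 1 < n, ev ω (t.1 + i * t.2) = ω ⟨t.1 + i * t.2 - 1, hlt⟩ := by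
  have h := valid_pt hk ht hi
  have hlt : t.1 + i * t.2 - 1 < n := by omega
  exact ⟨hlt, by rw [ev, dif_pos hlt]⟩

lemma pt_mem_C (hk : 2 ≤ k) {t : ℕ × ℕ} (ht : valid k n t) {i : ℕ} (hi : i < k)
    (hlt : t.1 + i * t.2 - 1 < n) : (⟨t.1 + i * t.2 - 1, hlt⟩ : Fin n) ∈ C k n t := by
  simp only [C, mem_filter, mem_univ, true_and]
  exact ⟨i, hi, by have := valid_pt hk ht hi; omega⟩

/-- E t is determined by coordinates in C t. -/
lemma Ev_det (hk : 2 ≤ k) (t : ℕ × ℕ) (ω ω' : Om n)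
    (hagree : ∀ v ∈ C k n t, ω v = ω' v) (hω : ω ∈ Ev k n t) : ω' ∈ Ev k n t := by
  simp only [Ev, mem_filter, mem_univ, true_and] at *
  obtain ⟨hv, hmono⟩ := hω
  refine ⟨hv, fun i hi => ?_⟩
  obtain ⟨hlt, he⟩ := ev_eq hk hv hi ω'
  obtain ⟨hlt0, he0⟩ := ev_eq hk hv (by omega : 0 < k) ω'
  obtain ⟨_, he2⟩ := ev_eq hk hv hi ω
  obtain ⟨_, he02⟩ := ev_eq hk hv (by omega : 0 < k) ω
  simp only [zero_mul, add_zero] at he0 he02 hlt0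
  rw [he, he0]
  rw [← hagree _ (pt_mem_C hk hv hi hlt)]
  rw [← hagree _ (by simpa using pt_mem_C hk hv (by omega : 0 < k) (by simpa using hlt0))]
  rw [← he2, ← he02]
  exact hmono i hi

lemma C_disj (hk : 2 ≤ k) {t s : ℕ × ℕ} (hs : valid k n s) (hns : s ∉ Gam k n t) :
    ∀ v : Fin n, v ∈ C k n s → v ∉ C k n t := by
  intro v hvs hvt
  simp only [C, mem_filter, mem_univ, true_and] at hvs hvt
  obtain ⟨j, hj, hje⟩ := hvs
  obtain ⟨i, hi, hie⟩ := hvt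
  apply hns
  simp only [Gam, mem_insert, mem_image]
  right
  refine ⟨((i, j), s.2), ?_, ?_⟩
  · simp only [mem_product, mem_range, mem_Icc]
    refine ⟨⟨hi, hj⟩, hs.2.1, ?_⟩
    have h3 := hs.2.2
    have h1 := hs.1
    rw [D0, Nat.le_div_iff_mul_le (by omega : 0 < k - 1)]
    have hc : s.2 * (k - 1) = (k - 1) * s.2 := Nat.mul_comm _ _
    omega
  · have : s.1 + j * s.2 = t.1 + i * t.2 := by omega
    have : s.1 = t.1 + i * t.2 - j * s.2 := by omega
    exact Prod.ext this.symm rfl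

lemma card_Gam : (Gam k n t).card ≤ 1 + k * k * D0 k n := by
  refine le_trans (card_insert_le _ _) ?_
  have h1 := Finset.card_image_le (s := (range k ×ˢ range k) ×ˢ Icc 1 (D0 k n))
    (f := fun q : (ℕ × ℕ) × ℕ => (t.1 + q.1.1 * t.2 - q.1.2 * q.2, q.2))
  simp only [card_product, card_range, Nat.card_Icc] at h1
  have : (D0 k n + 1 - 1) = D0 k n := by omega
  rw [this] at h1
  omega

lemma self_mem_Gam (t : ℕ × ℕ) : t ∈ Gam k n t := mem_insert_self t _

lemma C_card_ge (hk : 2 ≤ k) {t : ℕ × ℕ} (ht : valid k n t) : k ≤ (C k n t).card := by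
  have hn : 0 < n := by
    have := ht.2.2; have := ht.1; omega
  have hlt : ∀ i, i < k → t.1 + i * t.2 - 1 < n := by
    intro i hi
    have := valid_pt hk ht hi
    omega
  have := Finset.card_le_card_of_injOn
    (f := fun i : ℕ => (⟨(t.1 + i * t.2 - 1) % n, Nat.mod_lt _ hn⟩ : Fin n))
    (s := range k) (t := C k n t) ?_ ?_
  · simpa using this
  · intro i hi
    rw [mem_coe, mem_range] at hi
    have hmod : (t.1 + i * t.2 - 1) % n = t.1 + i * t.2 - 1 := Nat.mod_eq_of_lt (hlt i hi)
    have heq : (⟨(t.1 + i * t.2 - 1) % n, Nat.mod_lt _ hn⟩ : Fin n)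
        = ⟨t.1 + i * t.2 - 1, hlt i hi⟩ := Fin.ext hmod
    show (⟨(t.1 + i * t.2 - 1) % n, Nat.mod_lt _ hn⟩ : Fin n) ∈ C k n t
    rw [heq]
    exact pt_mem_C hk ht hi (hlt i hi)
  · intro i hi j hj hij
    rw [coe_range, Set.mem_Iio] at hi hj
    have hv : (t.1 + i * t.2 - 1) % n = (t.1 + j * t.2 - 1) % n := congrArg Fin.val hij
    rw [Nat.mod_eq_of_lt (hlt i hi), Nat.mod_eq_of_lt (hlt j hj)] at hv
    have h1 := ht.1
    have hmul : i * t.2 = j * t.2 := by omega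
    exact Nat.eq_of_mul_eq_mul_right (by have := ht.2.1; omega) hmul


lemma Ev_empty {t : ℕ × ℕ} (ht : ¬ valid k n t) : Ev k n t = ∅ := by
  rw [Ev, filter_eq_empty_iff]
  exact fun ω _ h => ht h.1

lemma mem_Ev_val (hk : 2 ≤ k) {t : ℕ × ℕ} {ω : Om n} (hω : ω ∈ Ev k n t)
    {v : Fin n} (hv : v ∈ C k n t) : ω v = ev ω t.1 := by
  simp only [Ev, mem_filter, mem_univ, true_and] at hω
  obtain ⟨hval, hmono⟩ := hω
  simp only [C, mem_filter, mem_univ, true_and] at hv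
  obtain ⟨i, hi, hvi⟩ := hv
  obtain ⟨hlt, he⟩ := ev_eq hk hval hi ω
  have hfin : v = (⟨t.1 + i * t.2 - 1, hlt⟩ : Fin n) := Fin.ext (by simp; omega)
  rw [hfin, ← he, hmono i hi]

lemma card_Ev (hk : 2 ≤ k) (hkn : k ≤ n) (t : ℕ × ℕ) :
    (Ev k n t).card ≤ 2 * 2 ^ (n - k) := by
  by_cases ht : valid k n t
  · have hinj := Finset.card_le_card_of_injOn
      (f := fun ω : Om n => (ev ω t.1,
        (fun v : ((C k n t)ᶜ : Finset (Fin n)) => ω v.1)))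
      (s := Ev k n t)
      (t := (univ : Finset (Fin 2 × (((C k n t)ᶜ : Finset (Fin n)) → Fin 2))))
      (fun _ _ => mem_univ _) ?_
    · have hcardu : (univ : Finset (Fin 2 × (((C k n t)ᶜ : Finset (Fin n)) → Fin 2))).card
          = 2 * 2 ^ (n - (C k n t).card) := by
        simp [card_univ, Fintype.card_fun, card_compl]

      rw [hcardu] at hinj
      refine le_trans hinj ?_
      have hC := C_card_ge hk ht
      have : n - (C k n t).card ≤ n - k := by omega
      exact Nat.mul_le_mul_left _ (Nat.pow_le_pow_right (by norm_num) this)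
    · intro ω hω ω' hω' heq
      rw [mem_coe] at hω hω'
      have h1 : ev ω t.1 = ev ω' t.1 := congrArg Prod.fst heq
      have h2 := congrArg Prod.snd heq
      funext v
      by_cases hv : v ∈ C k n t
      · rw [mem_Ev_val hk hω hv, mem_Ev_val hk hω' hv, h1]
      · exact congrFun h2 ⟨v, mem_compl.mpr hv⟩
  · rw [Ev_empty ht]
    simp

lemma hind_inst (hk : 2 ≤ k) (t : ℕ × ℕ) (S : Finset (ℕ × ℕ))
    (hdis : ∀ s ∈ S, s ∉ Gam k n t) :
    ((Ev k n t ∩ avoid (Ev k n) S).card : ℝ) * 2 ^ n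
      ≤ ((Ev k n t).card : ℝ) * (avoid (Ev k n) S).card := by
  refine le_of_eq ?_
  have key := indep (C k n t) (Ev k n t) (avoid (Ev k n) S)
    (fun f g hagree hf => Ev_det hk t f g (fun v hv => hagree v hv) hf) ?_
  · exact_mod_cast key
  · intro f g hagree hf
    simp only [avoid, mem_filter, mem_univ, true_and] at hf ⊢
    intro s hs hgs
    by_cases hvs : valid k n s
    · have hsub : ∀ v ∈ C k n s, g v = f v := by
        intro v hv
        exact (hagree v (C_disj hk hvs (hdis s hs) v hv)).symm
      exact hf s hs (Ev_det hk s g f hsub hgs)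
    · rw [Ev_empty hvs] at hgs
      exact absurd hgs (notMem_empty _)


lemma exists_good (k n : ℕ) (hk : 2 ≤ k) (hk3 : 3 ≤ k) (hkn : k ≤ n)
    (hX : (k : ℝ) ^ 2 * n / ((k : ℝ) - 1) < ((2 ^ (k - 3) : ℕ) : ℝ)) :
    ∃ χ : ℕ → Fin 2, ¬ hasMonoAP 2 k n χ := by
  classical
  set X : ℝ := ((2 ^ (k - 3) : ℕ) : ℝ) with hXdef
  have hXpos : 0 < X := by rw [hXdef]; positivity
  set p : ℝ := 2 / 2 ^ k with hpdef
  have hp : 0 ≤ p := by positivity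
  have hK2 : (2 : ℝ) ≤ (k : ℝ) := by exact_mod_cast hk
  have hK1 : (0 : ℝ) < (k : ℝ) - 1 := by linarith
  have h2k : (2 : ℝ) ^ k = 8 * X := by
    rw [hXdef]
    push_cast
    rw [show (8 : ℝ) = 2 ^ 3 by norm_num, ← pow_add]
    congr 1
    omega
  -- hcard
  have hcard : ∀ t : ℕ × ℕ, ((Ev k n t).card : ℝ) ≤ p * 2 ^ n := by
    intro t
    have h1 : ((Ev k n t).card : ℝ) ≤ ((2 * 2 ^ (n - k) : ℕ) : ℝ) := by
      exact_mod_cast card_Ev hk hkn t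
    refine le_trans h1 (le_of_eq ?_)
    have hpow : (2 : ℝ) ^ (n - k) * 2 ^ k = 2 ^ n := by
      rw [← pow_add]; congr 1; omega
    push_cast
    rw [hpdef]
    field_simp
    nlinarith [hpow]
  -- hD
  have hGam : ∀ t : ℕ × ℕ, 4 * p * ((Gam k n t).card : ℝ) ≤ 1 := by
    intro t
    have h1 : ((Gam k n t).card : ℝ) ≤ 1 + (k : ℝ) * k * (D0 k n : ℝ) := by
      have := card_Gam (k := k) (n := n) (t := t)
      exact_mod_cast this
    have hd : ((D0 k n : ℕ) : ℝ) * ((k : ℝ) - 1) ≤ (n : ℝ) - 1 := by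
      have hle : ((D0 k n : ℕ) : ℝ) ≤ (((n - 1 : ℕ) : ℝ)) / (((k - 1 : ℕ) : ℝ)) := by
        rw [D0]
        exact Nat.cast_div_le
      have hc1 : (((n - 1 : ℕ)) : ℝ) = (n : ℝ) - 1 := by
        rw [Nat.cast_sub (by omega : 1 ≤ n)]; norm_num
      have hc2 : (((k - 1 : ℕ)) : ℝ) = (k : ℝ) - 1 := by
        rw [Nat.cast_sub (by omega : 1 ≤ k)]; norm_num
      rw [hc1, hc2] at hle
      rw [← le_div_iff₀ hK1] at *
      exact hle
    have hXn : (k : ℝ) ^ 2 * n < X * ((k : ℝ) - 1) := by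
      rw [div_lt_iff₀ hK1] at hX
      exact hX
    have hd0 : (0 : ℝ) ≤ ((D0 k n : ℕ) : ℝ) := by positivity
    have hle : 1 + (k : ℝ) * k * (D0 k n : ℝ) ≤ X := by
      nlinarith [hd, hXn, hK2, hd0]
    have hcard' : ((Gam k n t).card : ℝ) ≤ X := le_trans h1 hle
    have hGnn : (0 : ℝ) ≤ ((Gam k n t).card : ℝ) := by positivity
    rw [hpdef, h2k]
    have heq : 4 * (2 / (8 * X)) * ((Gam k n t).card : ℝ) = ((Gam k n t).card : ℝ) / X := by
      field_simp
      ring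
    rw [heq, div_le_one hXpos]
    exact hcard'
  -- conclude
  have hpos := avoid_pos (Ev k n) (Gam k n) p hp self_mem_Gam hcard hGam
    (fun t S hdis => hind_inst hk t S hdis)
    ((range (n + 1) ×ˢ range (n + 1)).filter (fun t => valid k n t))
  have hpos' : 0 < (avoid (Ev k n)
      ((range (n + 1) ×ˢ range (n + 1)).filter (fun t => valid k n t))).card := by
    exact_mod_cast hpos
  obtain ⟨ω, hω⟩ := card_pos.mp hpos'
  refine ⟨fun m => ev ω m, ?_⟩
  rintro ⟨a, d, h1, h2, h3, h4⟩
  have hval : valid k n (a, d) := ⟨h1, h2, h3⟩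
  have hmem : ω ∈ Ev k n (a, d) := by
    simp only [Ev, mem_filter, mem_univ, true_and]
    exact ⟨hval, fun i hi => h4 i hi⟩
  have hSall : (a, d) ∈ (range (n + 1) ×ˢ range (n + 1)).filter (fun t => valid k n t) := by
    simp only [mem_filter, mem_product, mem_range]
    have hd1 : d ≤ (k - 1) * d := Nat.le_mul_of_pos_left d (by omega)
    exact ⟨⟨by omega, by omega⟩, hval⟩
  simp only [avoid, mem_filter, mem_univ, true_and] at hω
  exact hω _ ⟨(mem_filter.mp hSall).1, (mem_filter.mp hSall).2⟩ hmem

end Inst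

end VdWLLL

/-- If 2^(k-3) > k²·n/(k-1), then there is no injection from 2-colorings of {1,...,n}
to triples (progression index, color bit, 2-coloring of {1,...,n-k}), and hence some
2-coloring of {1,...,n} has no monochromatic k-term arithmetic progression. -/
theorem compression_fails (k n : ℕ) (hk : 2 ≤ k) (hn : k ≤ n)
    (h : ((k : ℝ) ^ 2 * n / ((k : ℝ) - 1)) < (2 : ℝ) ^ ((k : ℝ) - 3)) :
    (¬ ∃ f : (Fin n → Fin 2) →
        (Fin ⌊(k : ℝ) ^ 2 * n / ((k : ℝ) - 1)⌋₊ × Fin 2 × (Fin (n - k) → Fin 2)),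
      Function.Injective f) ∧
    ∃ χ : ℕ → Fin 2, ¬ hasMonoAP 2 k n χ := by
  have hk3 : 3 ≤ k := by
    by_contra hlt
    have hk2 : k = 2 := by omega
    subst hk2
    have hr : ((2:ℕ):ℝ) - 3 = (-1 : ℝ) := by norm_num
    rw [hr] at h
    have h12 : (2:ℝ) ^ (-1:ℝ) = 1/2 := by
      rw [Real.rpow_neg (by norm_num), Real.rpow_one]
      norm_num
    rw [h12] at h
    have hn2 : (2:ℝ) ≤ (n:ℝ) := by exact_mod_cast hn
    norm_num at h
    nlinarith
  have hcast : (2:ℝ) ^ ((k:ℝ) - 3) = ((2 ^ (k - 3) : ℕ) : ℝ) := by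
    have he : ((k:ℝ) - 3) = ((k - 3 : ℕ) : ℝ) := by
      rw [Nat.cast_sub hk3]; norm_num
    rw [he, Real.rpow_natCast]
    push_cast
    ring
  rw [hcast] at h
  constructor
  · rintro ⟨f, hf⟩
    have hcardle := Fintype.card_le_of_injective f hf
    simp only [Fintype.card_prod, Fintype.card_fun, Fintype.card_fin] at hcardle
    have hM : ⌊(k : ℝ) ^ 2 * n / ((k : ℝ) - 1)⌋₊ < 2 ^ (k - 3) := by
      have hKpos : (0:ℝ) < (k:ℝ) - 1 := by
        have : (2:ℝ) ≤ (k:ℝ) := by exact_mod_cast hk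
        linarith
      have h0 : (0:ℝ) ≤ (k : ℝ) ^ 2 * n / ((k : ℝ) - 1) := by positivity
      have hfl := Nat.floor_le h0
      have hlt : ((⌊(k : ℝ) ^ 2 * n / ((k : ℝ) - 1)⌋₊ : ℕ) : ℝ) < ((2 ^ (k - 3) : ℕ) : ℝ) :=
        lt_of_le_of_lt hfl h
      exact_mod_cast hlt
    have hstep : ⌊(k : ℝ) ^ 2 * n / ((k : ℝ) - 1)⌋₊ * (2 * 2 ^ (n - k))
        < 2 ^ (k - 3) * (2 * 2 ^ (n - k)) :=
      (Nat.mul_lt_mul_right (by positivity)).mpr hM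
    have hpow : 2 ^ (k - 3) * (2 * 2 ^ (n - k)) = 2 ^ (n - 2) := by
      rw [show 2 * 2 ^ (n - k) = 2 ^ (n - k + 1) by ring, ← pow_add]
      congr 1; omega
    have hle2 : (2:ℕ) ^ (n - 2) ≤ 2 ^ n := Nat.pow_le_pow_right (by norm_num) (by omega)
    omega
  · exact VdWLLL.exists_good k n hk hk3 hn h
end

section
/- If for every 2-coloring of {1,...,n} there exists a monochromatic k-term arithmetic progression, then 2^k ≤ 8·k²·n/(k−1); equivalently n ≥ 2^(k−3)·(k−1)/k². -/
namespace VDWAux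
def e (n x : ℕ) : Fin (n+1) := ⟨x % (n+1), Nat.mod_lt _ n.succ_pos⟩
lemma e_inj {n x y : ℕ} (hx : x ≤ n) (hy : y ≤ n) (h : e n x = e n y) : x = y := by
  have := congrArg Fin.val h
  simpa [e, Nat.mod_eq_of_lt (Nat.lt_succ_of_le hx), Nat.mod_eq_of_lt (Nat.lt_succ_of_le hy)]
    using this
def Mono (k n : ℕ) (p : ℕ × ℕ) (ω : Fin (n+1) → Fin 2) : Prop :=
  ∀ i < k, ω (e n (p.1 + i * p.2)) = ω (e n p.1)
instance (k n : ℕ) (p : ℕ × ℕ) : DecidablePred (Mono k n p) := fun ω => by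
  unfold Mono; infer_instance
def vbl (k : ℕ) (p : ℕ × ℕ) : Finset ℕ := (Finset.range k).image fun i => p.1 + i * p.2
def idx (k n : ℕ) : Finset (ℕ × ℕ) :=
  (Finset.Icc 1 n ×ˢ Finset.Icc 1 n).filter fun p => p.1 + (k-1) * p.2 ≤ n
def Good (k n : ℕ) (S : Finset (ℕ × ℕ)) : Finset (Fin (n+1) → Fin 2) :=
  Finset.univ.filter fun ω => ∀ p ∈ S, ¬ Mono k n p ω
def BG (k n : ℕ) (i : ℕ × ℕ) (S : Finset (ℕ × ℕ)) : Finset (Fin (n+1) → Fin 2) :=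
  Finset.univ.filter fun ω => Mono k n i ω ∧ ∀ p ∈ S, ¬ Mono k n p ω
lemma mem_idx {k n : ℕ} {p : ℕ × ℕ} (hk : 2 ≤ k) :
    p ∈ idx k n ↔ 1 ≤ p.1 ∧ 1 ≤ p.2 ∧ p.1 + (k-1) * p.2 ≤ n := by
  simp only [idx, Finset.mem_filter, Finset.mem_product, Finset.mem_Icc]
  constructor
  · rintro ⟨⟨⟨h1, _⟩, ⟨h2, _⟩⟩, h3⟩; exact ⟨h1, h2, h3⟩
  · rintro ⟨h1, h2, h3⟩
    have hd : p.2 ≤ (k-1) * p.2 := Nat.le_mul_of_pos_left _ (by omega)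
    refine ⟨⟨⟨h1, by omega⟩, ⟨h2, by omega⟩⟩, h3⟩
lemma vbl_le {k n : ℕ} {p : ℕ × ℕ} (hk : 2 ≤ k) (hp : p ∈ idx k n) :
    ∀ x ∈ vbl k p, x ≤ n := by
  rw [mem_idx hk] at hp
  intro x hx
  simp only [vbl, Finset.mem_image, Finset.mem_range] at hx
  obtain ⟨i, hi, rfl⟩ := hx
  have : i * p.2 ≤ (k-1) * p.2 := Nat.mul_le_mul_right _ (by omega)
  omega
lemma mono_congr {k n : ℕ} {p : ℕ × ℕ} {ω ω' : Fin (n+1) → Fin 2}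
    (hagree : ∀ x ∈ vbl k p, ω' (e n x) = ω (e n x)) (hk : 1 ≤ k) :
    Mono k n p ω' ↔ Mono k n p ω := by
  have hmem : ∀ i < k, p.1 + i * p.2 ∈ vbl k p := by
    intro i hi; exact Finset.mem_image.2 ⟨i, Finset.mem_range.2 hi, rfl⟩
  have h1 : p.1 ∈ vbl k p := by simpa using hmem 0 hk
  constructor <;> intro hm i hi
  · rw [← hagree _ (hmem i hi), ← hagree _ h1]; exact hm i hi
  · rw [hagree _ (hmem i hi), hagree _ h1]; exact hm i hi

/-- resampling the non-anchor points of AP `i` with values `v` -/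
noncomputable def rs (k n : ℕ) (i : ℕ × ℕ) (v : Fin (k-1) → Fin 2)
    (ω : Fin (n+1) → Fin 2) : Fin (n+1) → Fin 2 :=
  fun x => if h : ∃ j : Fin (k-1), e n (i.1 + (j.1+1) * i.2) = x then v h.choose else ω x

section key
variable {k n : ℕ} {i : ℕ × ℕ}

lemma pt_le (hk : 2 ≤ k) (hi : i ∈ idx k n) {j : ℕ} (hj : j < k) : i.1 + j * i.2 ≤ n := by
  rw [mem_idx hk] at hi
  have : j * i.2 ≤ (k-1) * i.2 := Nat.mul_le_mul_right _ (by omega)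
  omega

lemma pt_inj (hk : 2 ≤ k) (hi : i ∈ idx k n) {j1 j2 : ℕ} (h1 : j1 < k) (h2 : j2 < k)
    (h : e n (i.1 + j1 * i.2) = e n (i.1 + j2 * i.2)) : j1 = j2 := by
  rw [mem_idx hk] at hi
  have := e_inj (pt_le hk (by rw [mem_idx hk]; exact hi) h1)
    (pt_le hk (by rw [mem_idx hk]; exact hi) h2) h
  have hd : 1 ≤ i.2 := hi.2.1
  nlinarith [this]

lemma rs_at (hk : 2 ≤ k) (hi : i ∈ idx k n) (v : Fin (k-1) → Fin 2)
    (ω : Fin (n+1) → Fin 2) (j : Fin (k-1)) :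
    rs k n i v ω (e n (i.1 + (j.1+1) * i.2)) = v j := by
  have hex : ∃ j' : Fin (k-1), e n (i.1 + (j'.1+1) * i.2) = e n (i.1 + (j.1+1) * i.2) :=
    ⟨j, rfl⟩
  rw [rs, dif_pos hex]
  congr 1
  have hspec := hex.choose_spec
  have hj' : (hex.choose.1 + 1) = (j.1 + 1) :=
    pt_inj hk hi (by omega) (by omega) hspec
  exact Fin.ext (by omega)

lemma rs_off (k n : ℕ) (i : ℕ × ℕ) (v : Fin (k-1) → Fin 2) (ω : Fin (n+1) → Fin 2)
    (x : Fin (n+1)) (hx : ∀ j : Fin (k-1), e n (i.1 + (j.1+1) * i.2) ≠ x) :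
    rs k n i v ω x = ω x := by
  rw [rs, dif_neg]; push_neg; exact hx

lemma key (hk : 2 ≤ k) (hi : i ∈ idx k n) (S : Finset (ℕ × ℕ))
    (hS : ∀ p ∈ S, p ∈ idx k n) (hdisj : ∀ p ∈ S, Disjoint (vbl k p) (vbl k i)) :
    2^(k-1) * (BG k n i S).card ≤ (Good k n S).card := by
  classical
  have hki := hi
  rw [mem_idx hk] at hki
  obtain ⟨ha, hd, hle⟩ := hki
  have hptv : ∀ j : Fin (k-1), i.1 + (j.1+1) * i.2 ∈ vbl k i := by
    intro j
    exact Finset.mem_image.2 ⟨j.1+1, Finset.mem_range.2 (by omega), rfl⟩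
  -- the injection
  have hcard : ((BG k n i S) ×ˢ (Finset.univ : Finset (Fin (k-1) → Fin 2))).card
      = (BG k n i S).card * 2^(k-1) := by
    rw [Finset.card_product, Finset.card_univ]
    simp [Fintype.card_fun]
  have hmain : ((BG k n i S) ×ˢ (Finset.univ : Finset (Fin (k-1) → Fin 2))).card
      ≤ (Good k n S).card := by
    apply Finset.card_le_card_of_injOn (fun q => rs k n i q.2 q.1)
    · -- maps into Good
      rintro ⟨ω, v⟩ hq
      simp only [Finset.mem_coe, Finset.mem_product, BG, Finset.mem_filter, Finset.mem_univ, true_and] at hq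
      obtain ⟨⟨hmono, hgood⟩, -⟩ := hq
      simp only [Finset.mem_coe, Good, Finset.mem_filter, Finset.mem_univ, true_and]
      intro p hp
      rw [mono_congr (ω := ω) ?_ (by omega)]
      · exact hgood p hp
      · intro x hx
        apply rs_off
        intro j hj
        have hxle : x ≤ n := vbl_le hk (hS p hp) x hx
        have := e_inj (pt_le hk hi (j := j.1+1) (by omega)) hxle hj
        have hxin : x ∈ vbl k i := this ▸ hptv j
        exact absurd hxin (Finset.disjoint_left.1 (hdisj p hp) hx)
    · -- injective
      rintro ⟨ω1, v1⟩ hq1 ⟨ω2, v2⟩ hq2 heq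
      simp only [Finset.mem_product, BG, Finset.mem_filter, Finset.mem_univ, true_and,
        Finset.mem_coe] at hq1 hq2
      obtain ⟨⟨hm1, -⟩, -⟩ := hq1
      obtain ⟨⟨hm2, -⟩, -⟩ := hq2
      have heq' : rs k n i v1 ω1 = rs k n i v2 ω2 := heq
      have hv : v1 = v2 := by
        funext j
        have h1 := rs_at hk hi v1 ω1 j
        have h2 := rs_at hk hi v2 ω2 j
        rw [← h1, ← h2, heq']
      have hanchor : ∀ j : Fin (k-1), e n (i.1 + (j.1+1) * i.2) ≠ e n i.1 := by
        intro j hj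
        have : i.1 + (j.1+1) * i.2 = i.1 :=
          e_inj (pt_le hk hi (by omega)) (by omega) (by
            simpa using hj)
        nlinarith [this]
      have hω : ω1 = ω2 := by
        funext x
        by_cases hx : ∃ j : Fin (k-1), e n (i.1 + (j.1+1) * i.2) = x
        · obtain ⟨j, rfl⟩ := hx
          have e1 : ω1 (e n (i.1 + (j.1+1) * i.2)) = ω1 (e n i.1) := hm1 _ (by omega)
          have e2 : ω2 (e n (i.1 + (j.1+1) * i.2)) = ω2 (e n i.1) := hm2 _ (by omega)
          have ea : ω1 (e n i.1) = ω2 (e n i.1) := by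
            have r1 : rs k n i v1 ω1 (e n i.1) = ω1 (e n i.1) :=
              rs_off _ _ _ _ _ _ (fun j => hanchor j)
            have r2 : rs k n i v2 ω2 (e n i.1) = ω2 (e n i.1) :=
              rs_off _ _ _ _ _ _ (fun j => hanchor j)
            rw [← r1, ← r2, heq']
          rw [e1, e2, ea]
        · push_neg at hx
          have r1 : rs k n i v1 ω1 x = ω1 x := rs_off _ _ _ _ _ _ hx
          have r2 : rs k n i v2 ω2 x = ω2 x := rs_off _ _ _ _ _ _ hx
          rw [← r1, ← r2, heq']
      rw [hv, hω]
  rw [hcard] at hmain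
  rw [mul_comm]
  exact hmain


end key

section rest
variable {k n : ℕ} {i : ℕ × ℕ}

/-- neighbor count: APs meeting `vbl i` number at most `k * (k * ((n-1)/(k-1)))` -/
lemma nbr (hk : 2 ≤ k) (hi : i ∈ idx k n) (S : Finset (ℕ × ℕ)) (hS : S ⊆ idx k n) :
    (S.filter fun p => ¬ Disjoint (vbl k p) (vbl k i)).card
      ≤ k * (k * ((n-1)/(k-1))) := by
  classical
  have hT : ((vbl k i) ×ˢ ((Finset.range k) ×ˢ (Finset.Icc 1 ((n-1)/(k-1))))).card
      ≤ k * (k * ((n-1)/(k-1))) := by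
    rw [Finset.card_product, Finset.card_product, Finset.card_range, Nat.card_Icc]
    have h1 : (vbl k i).card ≤ k := (Finset.card_image_le).trans (by simp)
    simp only [Nat.add_sub_cancel]
    exact Nat.mul_le_mul h1 le_rfl
  refine le_trans ?_ hT
  apply Finset.card_le_card_of_injOn
    (fun p => if h : ∃ q : ℕ × ℕ, q.1 < k ∧ p.1 + q.1 * p.2 = q.2 ∧ q.2 ∈ vbl k i
      then (h.choose.2, (h.choose.1, p.2)) else (0,(0,0)))
  · intro p hp
    simp only [Finset.mem_coe, Finset.mem_filter] at hp
    obtain ⟨hpS, hnd⟩ := hp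
    obtain ⟨x, hxp, hxi⟩ := Finset.not_disjoint_iff.1 hnd
    simp only [vbl, Finset.mem_image, Finset.mem_range] at hxp
    obtain ⟨t, ht, hxt⟩ := hxp
    have hex : ∃ q : ℕ × ℕ, q.1 < k ∧ p.1 + q.1 * p.2 = q.2 ∧ q.2 ∈ vbl k i :=
      ⟨(t, x), ht, hxt, hxi⟩
    beta_reduce
    rw [dif_pos hex]
    obtain ⟨hq1, hq2, hq3⟩ := hex.choose_spec
    have hpidx := (mem_idx hk).1 (hS hpS)
    simp only [Finset.mem_coe, Finset.mem_product, Finset.mem_range, Finset.mem_Icc]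
    refine ⟨hq3, hq1, hpidx.2.1, ?_⟩
    rw [Nat.le_div_iff_mul_le (by omega : 0 < k - 1)]
    have hcomm : p.2 * (k-1) = (k-1) * p.2 := Nat.mul_comm _ _
    omega
  · intro p1 hp1 p2 hp2 heq
    simp only [Finset.coe_filter, Set.mem_setOf_eq] at hp1 hp2
    obtain ⟨x1, hx1p, hx1i⟩ := Finset.not_disjoint_iff.1 hp1.2
    simp only [vbl, Finset.mem_image, Finset.mem_range] at hx1p
    obtain ⟨t1, ht1, hxt1⟩ := hx1p
    obtain ⟨x2, hx2p, hx2i⟩ := Finset.not_disjoint_iff.1 hp2.2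
    simp only [vbl, Finset.mem_image, Finset.mem_range] at hx2p
    obtain ⟨t2, ht2, hxt2⟩ := hx2p
    have hex1 : ∃ q : ℕ × ℕ, q.1 < k ∧ p1.1 + q.1 * p1.2 = q.2 ∧ q.2 ∈ vbl k i :=
      ⟨(t1, x1), ht1, hxt1, hx1i⟩
    have hex2 : ∃ q : ℕ × ℕ, q.1 < k ∧ p2.1 + q.1 * p2.2 = q.2 ∧ q.2 ∈ vbl k i :=
      ⟨(t2, x2), ht2, hxt2, hx2i⟩
    simp only [dif_pos hex1, dif_pos hex2] at heq
    obtain ⟨hq11, hq12, -⟩ := hex1.choose_spec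
    obtain ⟨hq21, hq22, -⟩ := hex2.choose_spec
    have e1 : hex1.choose.2 = hex2.choose.2 := congrArg Prod.fst heq
    have e2 : hex1.choose.1 = hex2.choose.1 := congrArg (Prod.fst ∘ Prod.snd) heq
    have e3 : p1.2 = p2.2 := congrArg (Prod.snd ∘ Prod.snd) heq
    have e4 : hex1.choose.1 * p1.2 = hex2.choose.1 * p2.2 := by rw [e2, e3]
    have : p1.1 = p2.1 := by omega
    exact Prod.ext this e3

lemma good_insert (S : Finset (ℕ × ℕ)) :
    (BG k n i S).card + (Good k n (insert i S)).card = (Good k n S).card := by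
  classical
  have h1 : BG k n i S = (Good k n S).filter (fun ω => Mono k n i ω) := by
    ext ω; simp only [BG, Good, Finset.mem_filter, Finset.mem_univ, true_and]; tauto
  have h2 : Good k n (insert i S) = (Good k n S).filter (fun ω => ¬ Mono k n i ω) := by
    ext ω
    simp only [Good, Finset.mem_filter, Finset.mem_univ, true_and, Finset.mem_insert]
    constructor
    · intro hω; exact ⟨fun p hp => hω p (Or.inr hp), hω i (Or.inl rfl)⟩
    · rintro ⟨hω, hi⟩ p hp; rcases hp with rfl | hp; exact hi; exact hω p hp
  rw [h1, h2, Finset.card_filter_add_card_filter_not]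

lemma BG_anti {S2 S : Finset (ℕ × ℕ)} (h : S2 ⊆ S) : BG k n i S ⊆ BG k n i S2 := by
  intro ω hω
  simp only [BG, Finset.mem_filter, Finset.mem_univ, true_and] at hω ⊢
  exact ⟨hω.1, fun p hp => hω.2 p (h hp)⟩

lemma good_cover {S1 S2 S : Finset (ℕ × ℕ)} (hS : S = S1 ∪ S2) :
    (Good k n S2).card ≤ (Good k n S).card + ∑ j ∈ S1, (BG k n j S2).card := by
  classical
  have hsub : Good k n S2 ⊆ Good k n S ∪ S1.biUnion (fun j => BG k n j S2) := by
    intro ω hω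
    simp only [Good, Finset.mem_filter, Finset.mem_univ, true_and] at hω
    by_cases hall : ∀ p ∈ S1, ¬ Mono k n p ω
    · apply Finset.mem_union_left
      simp only [Good, Finset.mem_filter, Finset.mem_univ, true_and, hS]
      intro p hp
      rcases Finset.mem_union.1 hp with h | h
      · exact hall p h
      · exact hω p h
    · push_neg at hall
      obtain ⟨j, hj, hmj⟩ := hall
      apply Finset.mem_union_right
      exact Finset.mem_biUnion.2 ⟨j, hj, by
        simp only [BG, Finset.mem_filter, Finset.mem_univ, true_and]; exact ⟨hmj, hω⟩⟩
  calc (Good k n S2).card ≤ (Good k n S ∪ S1.biUnion (fun j => BG k n j S2)).card :=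
        Finset.card_le_card hsub
    _ ≤ (Good k n S).card + (S1.biUnion (fun j => BG k n j S2)).card :=
        Finset.card_union_le _ _
    _ ≤ (Good k n S).card + ∑ j ∈ S1, (BG k n j S2).card :=
        Nat.add_le_add_left (Finset.card_biUnion_le) _

/-- the main LLL induction -/
lemma mainLLL (hk : 2 ≤ k) (hD : 4 * (k * (k * ((n-1)/(k-1)))) < 2^(k-1)) :
    ∀ m : ℕ, ∀ S : Finset (ℕ × ℕ), S ⊆ idx k n → S.card ≤ m →
      ∀ i ∈ idx k n, 2^(k-1) * (BG k n i S).card ≤ 2 * (Good k n S).card := by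
  intro m
  induction m with
  | zero =>
    intro S hS hc i hi
    have : S = ∅ := Finset.card_eq_zero.1 (by omega)
    subst this
    have := key hk hi ∅ (by simp) (by simp)
    omega
  | succ m ih =>
    intro S hS hc i hi
    classical
    set S2 := S.filter (fun p => Disjoint (vbl k p) (vbl k i)) with hS2def
    set S1 := S.filter (fun p => ¬ Disjoint (vbl k p) (vbl k i)) with hS1def
    have hunion : S = S1 ∪ S2 := by
      rw [hS1def, hS2def, Finset.union_comm, Finset.filter_union_filter_not_eq]
    have hcards : S2.card + S1.card = S.card := by
      rw [hS1def, hS2def, Finset.card_filter_add_card_filter_not]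
    by_cases hS1e : S1 = ∅
    · have hall : ∀ p ∈ S, Disjoint (vbl k p) (vbl k i) := by
        intro p hp
        have : p ∈ S1 ∪ S2 := hunion ▸ hp
        rw [hS1e] at this
        simp only [Finset.empty_union, hS2def, Finset.mem_filter] at this
        exact this.2
      have := key hk hi S (fun p hp => hS hp) hall
      omega
    · have hS1ne : S1.Nonempty := Finset.nonempty_iff_ne_empty.2 hS1e
      have hc2 : S2.card ≤ m := by
        have := Finset.card_pos.2 hS1ne
        omega
      have hS2sub : S2 ⊆ idx k n := fun p hp => hS (Finset.mem_filter.1 hp).1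
      -- key on S2
      have hkey : 2^(k-1) * (BG k n i S2).card ≤ (Good k n S2).card :=
        key hk hi S2 hS2sub (fun p hp => (Finset.mem_filter.1 hp).2)
      have hBGsub : (BG k n i S).card ≤ (BG k n i S2).card :=
        Finset.card_le_card (BG_anti (hunion ▸ Finset.subset_union_right))
      -- cover
      have hcover := good_cover (k := k) (n := n) hunion
      -- IH on each j in S1
      have hsum : 2^(k-1) * ∑ j ∈ S1, (BG k n j S2).card
          ≤ S1.card * (2 * (Good k n S2).card) := by
        rw [Finset.mul_sum]
        calc ∑ j ∈ S1, 2^(k-1) * (BG k n j S2).card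
            ≤ ∑ _j ∈ S1, 2 * (Good k n S2).card := by
              apply Finset.sum_le_sum
              intro j hj
              have hjidx : j ∈ idx k n := hS (Finset.mem_filter.1 hj).1
              exact ih S2 hS2sub hc2 j hjidx
          _ = S1.card * (2 * (Good k n S2).card) := by
              rw [Finset.sum_const, smul_eq_mul]
      have hS1D : S1.card ≤ k * (k * ((n-1)/(k-1))) := nbr hk hi S hS
      -- arithmetic
      set q := 2^(k-1) with hq
      set D := k * (k * ((n-1)/(k-1))) with hDdef
      set G := (Good k n S).card
      set G2 := (Good k n S2).card
      set B := (BG k n i S).card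
      set B2 := (BG k n i S2).card
      set SB := ∑ j ∈ S1, (BG k n j S2).card
      -- q * G2 ≤ q * G + q * SB
      have h1 : q * G2 ≤ q * G + q * SB := by
        calc q * G2 ≤ q * (G + SB) := Nat.mul_le_mul_left _ hcover
          _ = q * G + q * SB := Nat.mul_add _ _ _
      have h2 : q * SB ≤ D * (2 * G2) :=
        le_trans hsum (Nat.mul_le_mul_right _ hS1D)
      have h3 : q * G2 ≤ q * G + D * (2 * G2) := le_trans h1 (by omega)
      -- from 4D < q get G2 ≤ 2G
      have h4 : (4 * D) * G2 ≤ q * G2 := Nat.mul_le_mul_right _ (by omega)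
      have h5 : q * G2 ≤ q * (2 * G) := by
        have h6 : 2 * (q * G2) ≤ 2 * (q * G) + (4 * D) * G2 := by
          have : 2 * (D * (2 * G2)) = (4 * D) * G2 := by ring
          omega
        have h7 : 2 * (q * G2) ≤ 2 * (q * G) + q * G2 := le_trans h6 (by omega)
        have : q * (2 * G) = 2 * (q * G) := by ring
        omega
      have hG2 : G2 ≤ 2 * G := Nat.le_of_mul_le_mul_left h5 (by positivity)
      calc q * B ≤ q * B2 := Nat.mul_le_mul_left _ hBGsub
        _ ≤ G2 := hkey
        _ ≤ 2 * G := hG2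

/-- positivity of the good set -/
lemma goodPos (hk : 3 ≤ k) (hD : 4 * (k * (k * ((n-1)/(k-1)))) < 2^(k-1)) :
    ∀ m : ℕ, ∀ S : Finset (ℕ × ℕ), S ⊆ idx k n → S.card ≤ m →
      0 < (Good k n S).card := by
  intro m
  induction m with
  | zero =>
    intro S hS hc
    have : S = ∅ := Finset.card_eq_zero.1 (by omega)
    subst this
    have hgu : Good k n ∅ = Finset.univ := by ext ω; simp [Good]
    rw [hgu, Finset.card_univ]
    exact Fintype.card_pos
  | succ m ih =>
    intro S hS hc
    rcases Finset.eq_empty_or_nonempty S with rfl | ⟨i, hiS⟩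
    · have hgu : Good k n ∅ = Finset.univ := by ext ω; simp [Good]
      rw [hgu, Finset.card_univ]
      exact Fintype.card_pos
    · set S' := S.erase i with hS'def
      have hS'sub : S' ⊆ idx k n := (Finset.erase_subset _ _).trans hS
      have hc' : S'.card ≤ m := by
        have hce : S'.card = S.card - 1 := by
          rw [hS'def]; exact Finset.card_erase_of_mem hiS
        have hcp : 0 < S.card := Finset.card_pos.2 ⟨i, hiS⟩
        omega
      have hG' : 0 < (Good k n S').card := ih S' hS'sub hc'
      have hiidx : i ∈ idx k n := hS hiS
      have hmain : 2^(k-1) * (BG k n i S').card ≤ 2 * (Good k n S').card :=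
        mainLLL (by omega) hD S'.card S' hS'sub le_rfl i hiidx
      have hins : insert i S' = S := Finset.insert_erase hiS
      have hpart := good_insert (k := k) (n := n) (i := i) S'
      rw [hins] at hpart
      have h4 : 4 ≤ 2^(k-1) := by
        calc (4:ℕ) = 2^2 := by norm_num
          _ ≤ 2^(k-1) := Nat.pow_le_pow_right (by norm_num) (by omega)
      have h5 : 4 * (BG k n i S').card ≤ 2^(k-1) * (BG k n i S').card :=
        Nat.mul_le_mul h4 le_rfl
      have h6 : 4 * (BG k n i S').card ≤ 2 * (Good k n S').card := le_trans h5 hmain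
      omega

end rest
end VDWAux


open VDWAux in
/-- If every 2-coloring of {1,...,n} contains a monochromatic k-term arithmetic
progression, then 2^k ≤ 8·k²·n/(k-1), equivalently n ≥ 2^(k-3)·(k-1)/k². -/
theorem two_color_bound (k n : ℕ) (hk : 2 ≤ k)
    (h : ∀ χ : ℕ → Fin 2, hasMonoAP 2 k n χ) :
    (2 : ℝ) ^ (k : ℝ) ≤ 8 * (k : ℝ) ^ 2 * n / ((k : ℝ) - 1) ∧
      (2 : ℝ) ^ ((k : ℝ) - 3) * ((k : ℝ) - 1) / (k : ℝ) ^ 2 ≤ (n : ℝ) := by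
  simp only [hasMonoAP] at h
  have hkR : (2:ℝ) ≤ (k:ℝ) := by exact_mod_cast hk
  have hnk : k ≤ n := by
    obtain ⟨a, d, ha, hd, hle, -⟩ := h (fun _ => 0)
    have : k - 1 ≤ (k-1) * d := Nat.le_mul_of_pos_right _ hd
    omega
  have core : (2:ℝ)^(k:ℕ) * ((k:ℝ) - 1) ≤ 8 * (k:ℝ)^2 * n := by
    by_contra hcon
    push_neg at hcon
    have hkm : ((k - 1 : ℕ) : ℝ) = (k:ℝ) - 1 := by
      rw [Nat.cast_sub (by omega : 1 ≤ k), Nat.cast_one]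
    have hnat : 8 * k^2 * n < 2^k * (k-1) := by
      rw [← hkm] at hcon
      exact_mod_cast hcon
    have h8 : 8 * k^2 < 2^k := by
      have h1 : 8*k^2*k ≤ 8*k^2*n := Nat.mul_le_mul_left _ hnk
      have h2 : 2^k*(k-1) ≤ 2^k*k := Nat.mul_le_mul_left _ (by omega)
      have h3 : 8*k^2*k < 2^k*k := by omega
      exact Nat.lt_of_mul_lt_mul_right h3
    have hk7 : 7 ≤ k := by
      by_contra hc
      push_neg at hc
      interval_cases k <;> norm_num at h8
    set Q := (n-1)/(k-1) with hQ
    have hQle : Q * (k-1) ≤ n-1 := Nat.div_mul_le_self _ _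
    have hD8 : 8 * (k * (k * Q)) < 2^k := by
      have h1 : 8 * (k*(k*Q))*(k-1) ≤ 8*k^2*(n-1) := by
        calc 8*(k*(k*Q))*(k-1) = 8*k^2*(Q*(k-1)) := by ring
          _ ≤ 8*k^2*(n-1) := Nat.mul_le_mul_left _ hQle
      have h2 : 8*k^2*(n-1) < 8*k^2*n :=
        Nat.mul_lt_mul_of_le_of_lt (le_refl (8*k^2)) (by omega) (by positivity)
      have h3 : 8*(k*(k*Q))*(k-1) < 2^k*(k-1) := by omega
      exact Nat.lt_of_mul_lt_mul_right h3
    have hD : 4 * (k*(k*Q)) < 2^(k-1) := by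
      have hpow : 2^k = 2*2^(k-1) := by
        conv_lhs => rw [show k = (k-1)+1 by omega]
        rw [pow_succ]; ring
      omega
    obtain ⟨ω, hω⟩ := Finset.card_pos.1
      (goodPos (by omega) hD (idx k n).card (idx k n) Finset.Subset.rfl le_rfl)
    simp only [Good, Finset.mem_filter, Finset.mem_univ, true_and] at hω
    obtain ⟨a, d, ha, hd, hle, hmono⟩ := h (fun x => ω (e n x))
    exact hω (a, d) ((mem_idx hk).2 ⟨ha, hd, hle⟩) (fun i hi => hmono i hi)
  have hk1pos : (0:ℝ) < (k:ℝ) - 1 := by linarith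
  have hk2pos : (0:ℝ) < (k:ℝ)^2 := by positivity
  have hrp : (2:ℝ)^((k:ℝ)) = (2:ℝ)^(k:ℕ) := Real.rpow_natCast 2 k
  constructor
  · rw [hrp, le_div_iff₀ hk1pos]
    exact core
  · have h38 : (2:ℝ)^(3:ℝ) = 8 := by
      rw [show (3:ℝ) = ((3:ℕ):ℝ) by norm_num, Real.rpow_natCast]; norm_num
    have h3 : (2:ℝ)^((k:ℝ)-3) = (2:ℝ)^(k:ℕ) / 8 := by
      rw [Real.rpow_sub (by norm_num : (0:ℝ) < 2), hrp, h38]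
    rw [h3, div_le_iff₀ hk2pos]
    nlinarith [core]
end
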